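/- arXiv:1706.03704 — 5 statements merged into one kernel-verified Lean document; each statement's English description precedes it below -/
import Mathlib

section
/- Let $p : (S^1)^n \to (S^1)^{n-1}$ be given by $p(w_1,\ldots,w_n) = (w_1,\ldots,w_{n-2},w_n)$, let $\bar p : K_n \to K_{n-1}$ be the map induced by $p$ on the quotients, and let $q_n : (S^1)^n \to K_n$, $q_{n-1} : (S^1)^{n-1} \to K_{n-1}$ be the quotient maps. Then the commutative square with these four maps is a pullback square of topological spaces; that is, the natural map from $(S^1)^n$ to the fiber product $K_n \times_{K_{n-1}} (S^1)^{n-1}$ (over $\bar p$ and $q_{n-1}$) is a homeomorphism. -/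
noncomputable section

/-- Complex conjugation on the unit circle. -/
def Circle.conj (z : Circle) : Circle :=
  ⟨starRingEnd ℂ z, by
    have := z.2
    simp only [Submonoid.unitSphere, Submonoid.mem_mk, Subsemigroup.mem_mk] at *
    simp_all [mem_sphere_zero_iff_norm]⟩

/-- Negation on the unit circle. -/
def Circle.neg (z : Circle) : Circle :=
  ⟨-(z : ℂ), by
    have := z.2
    simp only [Submonoid.unitSphere, Submonoid.mem_mk, Subsemigroup.mem_mk] at *
    simp_all [mem_sphere_zero_iff_norm]⟩

/-- The torus `(S¹)ⁿ`. -/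
abbrev Torus (n : ℕ) : Type := Fin n → Circle

/-- The involution `(z₁,…,z_{n-1},z_n) ↦ (z̄₁,…,z̄_{n-1},-z_n)` on the torus. -/
def kleinInvolution (n : ℕ) (z : Torus n) : Torus n :=
  fun i => if (i : ℕ) + 1 = n then (z i).neg else (z i).conj

/-- The identification defining the `n`-dimensional Klein bottle. -/
def KleinRel (n : ℕ) (z w : Torus n) : Prop := w = kleinInvolution n z

/-- The `n`-dimensional Klein bottle `Kₙ = (S¹)ⁿ/((z,z_n) ∼ (z̄,-z_n))`. -/
def Klein (n : ℕ) : Type := Quot (KleinRel n)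

instance (n : ℕ) : TopologicalSpace (Klein n) := instTopologicalSpaceQuot

/-- The map `p : (S¹)ⁿ → (S¹)^{n-1}`, `p(w₁,…,wₙ) = (w₁,…,w_{n-2},wₙ)`. -/
def dropPenultimate (n : ℕ) (w : Torus n) : Torus (n - 1) :=
  fun i => if h : (i : ℕ) < n - 2 then w ⟨i, by omega⟩ else w ⟨n - 1, by omega⟩

lemma Circle.conj_conj' (z : Circle) : z.conj.conj = z :=
  Subtype.ext (Complex.conj_conj (z : ℂ))

lemma Circle.neg_neg' (z : Circle) : z.neg.neg = z :=
  Subtype.ext (neg_neg (z : ℂ))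

lemma Circle.continuous_conj' : Continuous Circle.conj :=
  Continuous.subtype_mk (Complex.continuous_conj.comp continuous_subtype_val) _

lemma Circle.continuous_neg' : Continuous Circle.neg :=
  Continuous.subtype_mk (continuous_neg.comp continuous_subtype_val) _

lemma kleinInvolution_involutive (n : ℕ) : Function.Involutive (kleinInvolution n) := by
  intro z
  funext i
  simp only [kleinInvolution]
  by_cases h : (i : ℕ) + 1 = n <;> simp [h, Circle.conj_conj', Circle.neg_neg']

lemma continuous_kleinInvolution (n : ℕ) : Continuous (kleinInvolution n) := by
  apply continuous_pi
  intro i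
  by_cases h : (i : ℕ) + 1 = n <;>
    simp only [kleinInvolution, h, if_true, if_false] <;>
    [exact Circle.continuous_neg'.comp (continuous_apply i);
     exact Circle.continuous_conj'.comp (continuous_apply i)]

lemma continuous_dropPenultimate (n : ℕ) : Continuous (dropPenultimate n) := by
  apply continuous_pi
  intro i
  by_cases h : (i : ℕ) < n - 2 <;>
    simp only [dropPenultimate, h, dif_pos, dif_neg, not_false_iff] <;>
    exact continuous_apply _

lemma eqvGen_klein {n : ℕ} {z w : Torus n} (h : Relation.EqvGen (KleinRel n) z w) :
    w = z ∨ w = kleinInvolution n z := by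
  induction h with
  | rel a b hab => exact Or.inr hab
  | refl a => exact Or.inl rfl
  | symm a b _ ih =>
    rcases ih with h1 | h1
    · exact Or.inl h1.symm
    · exact Or.inr (by rw [h1, kleinInvolution_involutive])
  | trans a b c _ _ ih1 ih2 =>
    rcases ih1 with rfl | rfl <;> rcases ih2 with rfl | rfl
    · exact Or.inl rfl
    · exact Or.inr rfl
    · exact Or.inr rfl
    · exact Or.inl (kleinInvolution_involutive n _)

lemma klein_mk_eq_iff {n : ℕ} {z w : Torus n} :
    Quot.mk (KleinRel n) z = Quot.mk (KleinRel n) w ↔ (w = z ∨ w = kleinInvolution n z) := by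
  constructor
  · intro h
    exact eqvGen_klein (Quot.eqvGen_exact h)
  · rintro (rfl | rfl)
    · rfl
    · exact Quot.sound rfl

lemma klein_t2 (n : ℕ) : T2Space (Klein n) := by
  constructor
  intro a b hab
  induction a using Quot.ind with | _ z =>
  induction b using Quot.ind with | _ w =>
  have hσσ := kleinInvolution_involutive n
  have hzw1 : w ≠ z := fun h => hab (klein_mk_eq_iff.mpr (Or.inl h))
  have hzw2 : w ≠ kleinInvolution n z := fun h => hab (klein_mk_eq_iff.mpr (Or.inr h))
  have hA : IsCompact ({z, kleinInvolution n z} : Set (Torus n)) :=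
    ((Set.finite_singleton _).insert _).isCompact
  have hB : IsClosed ({w, kleinInvolution n w} : Set (Torus n)) :=
    ((Set.finite_singleton _).insert _).isClosed
  have hd : Disjoint ({z, kleinInvolution n z} : Set (Torus n)) {w, kleinInvolution n w} := by
    rw [Set.disjoint_left]
    intro x hx1 hx2
    simp only [Set.mem_insert_iff, Set.mem_singleton_iff] at hx1 hx2
    rcases hx1 with rfl | rfl <;> rcases hx2 with h2 | h2
    · exact hzw1 h2.symm
    · exact hzw2 (by rw [h2, hσσ])
    · exact hzw2 h2.symm
    · exact hzw1 (hσσ.injective h2).symm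
  obtain ⟨U, V, hU, hV, hAU, hBV, hUV⟩ := SeparatedNhds.of_isCompact_isClosed hA hB hd
  have hU₀ : IsOpen (U ∩ kleinInvolution n ⁻¹' U) :=
    hU.inter (hU.preimage (continuous_kleinInvolution n))
  have hV₀ : IsOpen (V ∩ kleinInvolution n ⁻¹' V) :=
    hV.inter (hV.preimage (continuous_kleinInvolution n))
  have hsat : ∀ (W : Set (Torus n)),
      Quot.mk (KleinRel n) ⁻¹' (Quot.mk (KleinRel n) '' (W ∩ kleinInvolution n ⁻¹' W)) =
        W ∩ kleinInvolution n ⁻¹' W := by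
    intro W
    ext x
    simp only [Set.mem_preimage, Set.mem_image, Set.mem_inter_iff]
    constructor
    · rintro ⟨u, ⟨hu1, hu2⟩, hq⟩
      rcases klein_mk_eq_iff.mp hq with rfl | rfl
      · exact ⟨hu1, hu2⟩
      · refine ⟨hu2, ?_⟩
        show kleinInvolution n (kleinInvolution n u) ∈ W
        rw [hσσ u]; exact hu1
    · intro hx
      exact ⟨x, hx, rfl⟩
  have hoU : IsOpen (Quot.mk (KleinRel n) '' (U ∩ kleinInvolution n ⁻¹' U)) := by
    rw [← isQuotientMap_quot_mk.isOpen_preimage, hsat U]; exact hU₀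
  have hoV : IsOpen (Quot.mk (KleinRel n) '' (V ∩ kleinInvolution n ⁻¹' V)) := by
    rw [← isQuotientMap_quot_mk.isOpen_preimage, hsat V]; exact hV₀
  refine ⟨_, _, hoU, hoV, ⟨z, ⟨hAU (Set.mem_insert _ _), ?_⟩, rfl⟩,
    ⟨w, ⟨hBV (Set.mem_insert _ _), ?_⟩, rfl⟩, ?_⟩
  · exact Set.mem_preimage.mpr (hAU (Set.mem_insert_of_mem _ rfl))
  · exact Set.mem_preimage.mpr (hBV (Set.mem_insert_of_mem _ rfl))
  · refine Set.disjoint_left.mpr ?_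
    rintro x ⟨u, hu, rfl⟩ ⟨v, hv, hq⟩
    rcases klein_mk_eq_iff.mp hq.symm with rfl | rfl
    · exact hUV.ne_of_mem hu.1 hv.1 rfl
    · exact hUV.ne_of_mem hu.2 hv.1 rfl

lemma drop_invol (n : ℕ) (hn : 2 ≤ n) (w : Torus n) :
    dropPenultimate n (kleinInvolution n w) = kleinInvolution (n - 1) (dropPenultimate n w) := by
  funext i
  have hi : (i : ℕ) < n - 1 := i.2
  simp only [dropPenultimate, kleinInvolution]
  by_cases h : (i : ℕ) < n - 2
  · rw [dif_pos h, dif_pos h, if_neg (by omega), if_neg (by omega)]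
  · rw [dif_neg h, dif_neg h, if_pos (by omega), if_pos (by omega)]

/-- The square
`(S¹)ⁿ → (S¹)^{n-1}`, `Kₙ → K_{n-1}` (horizontal maps `p`, `p̄`; vertical maps the quotient
maps) is a pullback square: the natural map from `(S¹)ⁿ` to the fiber product
`Kₙ ×_{K_{n-1}} (S¹)^{n-1}` is a homeomorphism. -/
theorem klein_pullback (n : ℕ) (hn : 2 ≤ n)
    (pbar : Klein n → Klein (n - 1)) (hpbar : Continuous pbar)
    (hcomm : ∀ w : Torus n,
      pbar (Quot.mk (KleinRel n) w) = Quot.mk (KleinRel (n - 1)) (dropPenultimate n w)) :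
    ∃ e : Torus n ≃ₜ {x : Klein n × Torus (n - 1) //
        pbar x.1 = Quot.mk (KleinRel (n - 1)) x.2},
      ∀ w : Torus n,
        ((e w : Klein n × Torus (n - 1))) =
          (Quot.mk (KleinRel n) w, dropPenultimate n w) := by
  haveI : T2Space (Klein n) := klein_t2 n
  set T := {x : Klein n × Torus (n - 1) // pbar x.1 = Quot.mk (KleinRel (n - 1)) x.2} with hT
  have hdrop_ne : ∀ w : Torus n,
      dropPenultimate n w ≠ dropPenultimate n (kleinInvolution n w) := by
    intro w h
    have h2 := congrFun h ⟨n - 2, by omega⟩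
    simp only [dropPenultimate, kleinInvolution, dif_neg (lt_irrefl (n - 2))] at h2
    rw [if_pos (by omega)] at h2
    have h3 : ((w ⟨n - 1, by omega⟩ : Circle) : ℂ) = -((w ⟨n - 1, by omega⟩ : Circle) : ℂ) :=
      congrArg Subtype.val h2
    have h4 : ((w ⟨n - 1, by omega⟩ : Circle) : ℂ) = 0 :=
      add_self_eq_zero.mp (eq_neg_iff_add_eq_zero.mp h3)
    exact Circle.coe_ne_zero _ h4
  set f : Torus n → T := fun w =>
    ⟨(Quot.mk (KleinRel n) w, dropPenultimate n w), by rw [hcomm]⟩ with hf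
  have hinj : Function.Injective f := by
    intro w w' h
    have h1 : Quot.mk (KleinRel n) w = Quot.mk (KleinRel n) w' :=
      congrArg (fun x : T => x.1.1) h
    have h2 : dropPenultimate n w = dropPenultimate n w' :=
      congrArg (fun x : T => x.1.2) h
    rcases klein_mk_eq_iff.mp h1 with rfl | rfl
    · rfl
    · exact absurd h2 (hdrop_ne w)
  have hsurj : Function.Surjective f := by
    rintro ⟨⟨a, b⟩, hab⟩
    induction a using Quot.ind with | _ z =>
    rw [hcomm] at hab
    rcases klein_mk_eq_iff.mp hab with rfl | rfl
    · exact ⟨z, rfl⟩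
    · refine ⟨kleinInvolution n z, Subtype.ext ?_⟩
      show (Quot.mk (KleinRel n) (kleinInvolution n z),
        dropPenultimate n (kleinInvolution n z)) =
          (Quot.mk (KleinRel n) z, kleinInvolution (n - 1) (dropPenultimate n z))
      rw [drop_invol n hn z]
      exact Prod.ext (Quot.sound (show KleinRel n z (kleinInvolution n z) from rfl)).symm rfl
  have hcont : Continuous f :=
    Continuous.subtype_mk
      (((continuous_quot_mk).prodMk (continuous_dropPenultimate n))) _
  let E : Torus n ≃ T := Equiv.ofBijective f ⟨hinj, hsurj⟩
  refine ⟨Continuous.homeoOfEquivCompactToT2 (f := E) hcont, fun w => rfl⟩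
end
end

section
/- In $H^*(K_n;\mathbb{Z}_2) \cong \mathbb{Z}_2[R,V_1,\ldots,V_{n-1}]/(R^2, V_i^2+RV_i)$, the Steenrod squares act as follows: for $j > 0$, $\varepsilon \in \{0,1\}$, and distinct indices $i_1,\ldots,i_r$, one has $\mathrm{Sq}^j(R^\varepsilon V_{i_1}\cdots V_{i_r}) = R V_{i_1}\cdots V_{i_r}$ if $j=1$, $\varepsilon = 0$, and $r$ is odd, and $\mathrm{Sq}^j(R^\varepsilon V_{i_1}\cdots V_{i_r}) = 0$ otherwise. -/
noncomputable section

noncomputable section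

/-- An (unreduced, multiplicative) mod-2 singular-type cohomology theory on topological
spaces: a contravariant functor `X ↦ H*(X; ℤ/2)` into graded commutative rings, which is
homotopy invariant, satisfies the dimension axiom, and has Mayer–Vietoris sequences for
open covers (with natural connecting homomorphisms).  Singular cohomology with `ℤ/2`
coefficients is such a theory. -/
structure CohomologyTheoryZ2 : Type 1 where
  /-- The cohomology ring of a space. -/
  H : (X : Type) → [TopologicalSpace X] → Type
  /-- The ring structure (cup product); commutative since the coefficients are `ℤ/2`. -/
  ring : (X : Type) → [TopologicalSpace X] → CommRing (H X)
  /-- The grading by degree. -/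
  grade : (X : Type) → [TopologicalSpace X] → ℕ → AddSubgroup (H X)
  /-- The grading is an internal direct sum decomposition. -/
  internal : ∀ (X : Type) [TopologicalSpace X],
    DirectSum.IsInternal fun n => AddSubgroup.toIntSubmodule (grade X n)
  one_mem : ∀ (X : Type) [TopologicalSpace X], (1 : H X) ∈ grade X 0
  mul_mem : ∀ (X : Type) [TopologicalSpace X] (m k : ℕ) (x y : H X),
    x ∈ grade X m → y ∈ grade X k → x * y ∈ grade X (m + k)
  /-- Contravariant functoriality: pullback along continuous maps. -/
  map : {X Y : Type} → [TopologicalSpace X] → [TopologicalSpace Y] → C(X, Y) → H Y →+* H X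
  map_grade : ∀ {X Y : Type} [TopologicalSpace X] [TopologicalSpace Y] (f : C(X, Y)) (k : ℕ)
    (y : H Y), y ∈ grade Y k → map f y ∈ grade X k
  map_id : ∀ (X : Type) [TopologicalSpace X] (x : H X), map (ContinuousMap.id X) x = x
  map_comp : ∀ {X Y Z : Type} [TopologicalSpace X] [TopologicalSpace Y] [TopologicalSpace Z]
    (f : C(X, Y)) (g : C(Y, Z)) (z : H Z), map f (map g z) = map (g.comp f) z
  /-- Homotopy invariance. -/
  homotopy_invariant : ∀ {X Y : Type} [TopologicalSpace X] [TopologicalSpace Y]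
    (f g : C(X, Y)), f.Homotopic g → map f = map g
  /-- Dimension axiom: the cohomology of a point is `ℤ/2`, in degree `0`. -/
  dim : H PUnit ≃+* ZMod 2
  dim_grade : ∀ k : ℕ, k ≠ 0 → grade PUnit k = ⊥
  /-- Mayer–Vietoris connecting homomorphism of an (arbitrary) pair of subsets. -/
  mv : {X : Type} → [TopologicalSpace X] → (U V : Set X) → H ↥(U ∩ V) →+ H X
  mv_grade : ∀ {X : Type} [TopologicalSpace X] (U V : Set X) (k : ℕ) (w : H ↥(U ∩ V)),
    w ∈ grade ↥(U ∩ V) k → mv U V w ∈ grade X (k + 1)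
  /-- Mayer–Vietoris exactness at `H X`, for an open cover `X = U ∪ V`. -/
  mv_exact_left : ∀ {X : Type} [TopologicalSpace X] (U V : Set X),
    IsOpen U → IsOpen V → U ∪ V = Set.univ → ∀ x : H X,
      (map ⟨Subtype.val, continuous_subtype_val⟩ x = (0 : H ↥U) ∧
        map ⟨Subtype.val, continuous_subtype_val⟩ x = (0 : H ↥V)) ↔ ∃ w, mv U V w = x
  /-- Mayer–Vietoris exactness at `H U ⊕ H V`. -/
  mv_exact_mid : ∀ {X : Type} [TopologicalSpace X] (U V : Set X),
    IsOpen U → IsOpen V → U ∪ V = Set.univ → ∀ (u : H ↥U) (v : H ↥V),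
      (map ⟨Set.inclusion Set.inter_subset_left, continuous_inclusion _⟩ u -
        map ⟨Set.inclusion Set.inter_subset_right, continuous_inclusion _⟩ v = 0) ↔
      ∃ x : H X, map ⟨Subtype.val, continuous_subtype_val⟩ x = u ∧
        map ⟨Subtype.val, continuous_subtype_val⟩ x = v
  /-- Mayer–Vietoris exactness at `H (U ∩ V)`. -/
  mv_exact_right : ∀ {X : Type} [TopologicalSpace X] (U V : Set X),
    IsOpen U → IsOpen V → U ∪ V = Set.univ → ∀ w : H ↥(U ∩ V),
      mv U V w = 0 ↔ ∃ (u : H ↥U) (v : H ↥V),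
        map ⟨Set.inclusion Set.inter_subset_left, continuous_inclusion _⟩ u -
          map ⟨Set.inclusion Set.inter_subset_right, continuous_inclusion _⟩ v = w
  /-- Naturality of the connecting homomorphism. -/
  mv_natural : ∀ {X Y : Type} [TopologicalSpace X] [TopologicalSpace Y] (f : C(X, Y))
    (U V : Set Y) (g : C(↥(f ⁻¹' U ∩ f ⁻¹' V), ↥(U ∩ V))),
    (∀ p, (g p : Y) = f p) →
    ∀ w : H ↥(U ∩ V), mv (f ⁻¹' U) (f ⁻¹' V) (map g w) = map f (mv U V w)

attribute [instance] CohomologyTheoryZ2.ring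

/-- A mod-2 cohomology theory equipped with Steenrod squares. -/
structure SteenrodCohomologyZ2 extends CohomologyTheoryZ2 where
  /-- The Steenrod squaring operations `Sq^j`. -/
  Sq : (j : ℕ) → {X : Type} → [TopologicalSpace X] → H X →+ H X
  sq_zero : ∀ {X : Type} [TopologicalSpace X] (x : H X), Sq 0 x = x
  sq_grade : ∀ {X : Type} [TopologicalSpace X] (j k : ℕ) (x : H X),
    x ∈ grade X k → Sq j x ∈ grade X (k + j)
  sq_square : ∀ {X : Type} [TopologicalSpace X] (k : ℕ) (x : H X),
    x ∈ grade X k → Sq k x = x * x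
  sq_vanish : ∀ {X : Type} [TopologicalSpace X] (j k : ℕ) (x : H X),
    x ∈ grade X k → k < j → Sq j x = 0
  sq_cartan : ∀ {X : Type} [TopologicalSpace X] (j : ℕ) (x y : H X),
    Sq j (x * y) = ∑ p ∈ Finset.range (j + 1), Sq p x * Sq (j - p) y
  sq_natural : ∀ {X Y : Type} [TopologicalSpace X] [TopologicalSpace Y] (f : C(X, Y))
    (j : ℕ) (y : H Y), Sq j (map f y) = map f (Sq j y)

open MvPolynomial

/-- Variables for the presentation of `H*(Kₙ; ℤ/2)`: `none` is `R`, `some i` is `V_{i+1}`. -/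
abbrev KVar (n : ℕ) := Option (Fin n)

/-- The relations `R²` and `Vᵢ² + R Vᵢ`. -/
def kleinRelations (n : ℕ) : Set (MvPolynomial (KVar n) (ZMod 2)) :=
  {X none ^ 2} ∪
    Set.range fun i : Fin n => X (some i) ^ 2 + X none * X (some i)

/-- The ring `ℤ/2[R,V₁,…,Vₙ]/(R², Vᵢ² + R Vᵢ)`. -/
def KleinCohRing (n : ℕ) : Type :=
  MvPolynomial (KVar n) (ZMod 2) ⧸ Ideal.span (kleinRelations n)

instance (n : ℕ) : CommRing (KleinCohRing n) := by unfold KleinCohRing; infer_instance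

/-- The degree-`m` part of the presented ring. -/
def kleinCohGrade (n m : ℕ) : Set (KleinCohRing n) :=
  (Ideal.Quotient.mk (Ideal.span (kleinRelations n))) '' {p | p.IsHomogeneous m}

/-- In `H*(Kₙ;ℤ₂) = ℤ₂[R,V₁,…,V_{n-1}]/(R²,Vᵢ²+RVᵢ)`, for `j > 0`:
`Sq^j(Rᵉ V_{i₁} ⋯ V_{i_r}) = R V_{i₁} ⋯ V_{i_r}` if `j = 1`, `e = 0` and `r` is odd, and
`= 0` otherwise.  (Here `R`, `V i` are the standard generators of the cohomology of
`K_{n+1}`, pinned down by a graded isomorphism with the presented ring.) -/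
theorem klein_steenrod_action (n : ℕ) (T : SteenrodCohomologyZ2)
    (R : T.H (Klein (n + 1))) (V : Fin n → T.H (Klein (n + 1)))
    (e : T.H (Klein (n + 1)) ≃+* KleinCohRing n)
    (hgr : ∀ m : ℕ, e '' (T.grade (Klein (n + 1)) m : Set (T.H (Klein (n + 1)))) =
      kleinCohGrade n m)
    (heR : e R = Ideal.Quotient.mk (Ideal.span (kleinRelations n)) (X none))
    (heV : ∀ i : Fin n, e (V i) =
      Ideal.Quotient.mk (Ideal.span (kleinRelations n)) (X (some i))) :
    ∀ (j : ℕ), 0 < j → ∀ (ε : ℕ), ε ≤ 1 → ∀ (s : Finset (Fin n)),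
      T.Sq j (R ^ ε * ∏ i ∈ s, V i) =
        if j = 1 ∧ ε = 0 ∧ Odd s.card then R * ∏ i ∈ s, V i else 0 := by
  classical
  set I := Ideal.span (kleinRelations n) with hI
  set mk := Ideal.Quotient.mk I with hmk
  -- basic ring relations
  have hR2 : R * R = 0 := by
    apply e.injective
    rw [map_mul, heR, map_zero]
    show (mk (X none) * mk (X none) : MvPolynomial (KVar n) (ZMod 2) ⧸ I) = 0
    rw [← RingHom.map_mul mk]
    rw [Ideal.Quotient.eq_zero_iff_mem]
    exact Ideal.subset_span (Set.mem_union_left _ (by simp [sq]))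
  have hV2 : ∀ i : Fin n, V i * V i = R * V i := by
    intro i
    apply e.injective
    rw [map_mul, map_mul, heR, heV]
    show (mk (X (some i)) * mk (X (some i)) : MvPolynomial (KVar n) (ZMod 2) ⧸ I) =
      mk (X none) * mk (X (some i))
    rw [← RingHom.map_mul mk, ← RingHom.map_mul mk]
    rw [Ideal.Quotient.eq]
    have hmem : (X (some i) : MvPolynomial (KVar n) (ZMod 2)) ^ 2
        + X none * X (some i) ∈ I :=
      Ideal.subset_span (Set.mem_union_right _ ⟨i, rfl⟩)
    have heq : (X (some i) : MvPolynomial (KVar n) (ZMod 2)) * X (some i)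
        - X none * X (some i)
        = X (some i) ^ 2 + X none * X (some i) := by
      rw [CharTwo.sub_eq_add, sq]
    rwa [heq]
  -- grading of generators
  have hmemgrade : ∀ (x : T.H (Klein (n + 1))) (p : MvPolynomial (KVar n) (ZMod 2)),
      e x = mk p → p.IsHomogeneous 1 → x ∈ T.grade (Klein (n + 1)) 1 := by
    intro x p hx hp
    have h1 := hgr 1
    have : e x ∈ kleinCohGrade n 1 := ⟨p, hp, hx.symm⟩
    rw [← h1] at this
    obtain ⟨y, hy, hey⟩ := this
    rwa [← e.injective hey]
  have hRgr : R ∈ T.grade (Klein (n + 1)) 1 :=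
    hmemgrade R _ heR (isHomogeneous_X _ _)
  have hVgr : ∀ i, V i ∈ T.grade (Klein (n + 1)) 1 :=
    fun i => hmemgrade (V i) _ (heV i) (isHomogeneous_X _ _)
  -- characteristic two
  have h2 : ∀ x : T.H (Klein (n + 1)), x + x = 0 := by
    intro x
    apply e.injective
    rw [map_add, map_zero]
    have : e x + e x = (1 + 1) * e x := by ring
    rw [this]
    have h11 : (1 + 1 : KleinCohRing n) = 0 := by
      have : ((1 : MvPolynomial (KVar n) (ZMod 2)) + 1) = 0 := by
        have hz : ((1 : ZMod 2) + 1) = 0 := by decide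
        rw [← C_1, ← C_add, hz, C_0]
      have h := congrArg mk this
      rw [map_add, map_one, map_zero] at h
      exact h
    rw [h11, zero_mul]
  have hsmul : ∀ (c : ℕ) (x : T.H (Klein (n + 1))),
      c • x = if Odd c then x else 0 := by
    intro c x
    induction c with
    | zero => simp
    | succ c ih =>
      rw [succ_nsmul, ih]
      by_cases hc : Odd c
      · simp [hc, Nat.odd_add_one, h2 x]
      · simp [hc, Nat.odd_add_one]
  -- Steenrod squares on the generators
  have sq1V : ∀ i, T.Sq 1 (V i) = R * V i := by
    intro i; rw [T.sq_square 1 (V i) (hVgr i), hV2]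
  have sq1R : T.Sq 1 R = 0 := by
    rw [T.sq_square 1 R hRgr, hR2]
  have sqHighV : ∀ (i : Fin n) (p : ℕ), 2 ≤ p → T.Sq p (V i) = 0 := by
    intro i p hp; exact T.sq_vanish p 1 (V i) (hVgr i) (by omega)
  have sqHighR : ∀ (p : ℕ), 2 ≤ p → T.Sq p R = 0 := by
    intro p hp; exact T.sq_vanish p 1 R hRgr (by omega)
  -- Cartan sum reduction for products with a degree-one class
  have hsumred : ∀ (x y : T.H (Klein (n + 1))) (j : ℕ), 1 ≤ j →
      (∀ p, 2 ≤ p → T.Sq p x = 0) →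
      T.Sq j (x * y) = x * T.Sq j y + T.Sq 1 x * T.Sq (j - 1) y := by
    intro x y j hj hhigh
    rw [T.sq_cartan]
    have hsub : Finset.range 2 ⊆ Finset.range (j + 1) :=
      Finset.range_subset_range.mpr (by omega)
    rw [← Finset.sum_subset hsub (by
      intro p hp hp2
      rw [hhigh p (by simp at hp2; omega), zero_mul])]
    rw [Finset.sum_range_succ, Finset.sum_range_succ, Finset.sum_range_zero,
      zero_add, T.sq_zero, Nat.sub_zero]
  -- main induction: squares on products of the V's
  have key : ∀ s : Finset (Fin n),
      (T.Sq 1 (∏ i ∈ s, V i) = s.card • (R * ∏ i ∈ s, V i)) ∧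
        (∀ j : ℕ, 2 ≤ j → T.Sq j (∏ i ∈ s, V i) = 0) := by
    intro s
    induction s using Finset.induction_on with
    | empty =>
      constructor
      · rw [Finset.prod_empty, T.sq_vanish 1 0 _ (T.one_mem _) one_pos]
        simp
      · intro j hj
        rw [Finset.prod_empty, T.sq_vanish j 0 _ (T.one_mem _) (by omega)]
    | @insert a s' ha ih =>
      constructor
      · rw [Finset.prod_insert ha, hsumred (V a) _ 1 le_rfl (sqHighV a),
          sq1V a, Nat.sub_self, T.sq_zero, ih.1,
          Finset.card_insert_of_notMem ha, succ_nsmul, mul_smul_comm]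
        have : V a * (R * ∏ i ∈ s', V i) = R * (V a * ∏ i ∈ s', V i) := by ring
        rw [this]
        have : R * V a * ∏ i ∈ s', V i = R * (V a * ∏ i ∈ s', V i) := by ring
        rw [this]
      · intro j hj
        rw [Finset.prod_insert ha, hsumred (V a) _ j (by omega) (sqHighV a),
          sq1V a, ih.2 j hj, mul_zero, zero_add]
        rcases Nat.lt_or_ge j 3 with h3 | h3
        · have hj2 : j - 1 = 1 := by omega
          rw [hj2, ih.1, mul_smul_comm]
          have : R * V a * (R * ∏ i ∈ s', V i)
              = (R * R) * (V a * ∏ i ∈ s', V i) := by ring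
          rw [this, hR2, zero_mul, smul_zero]
        · rw [ih.2 (j - 1) (by omega), mul_zero]
  -- conclusion
  intro j hj ε hε s
  interval_cases ε
  · rw [pow_zero, one_mul]
    by_cases hj1 : j = 1
    · subst hj1
      rw [(key s).1, hsmul]
      by_cases hc : Odd s.card
      · rw [if_pos hc, if_pos ⟨rfl, rfl, hc⟩]
      · rw [if_neg hc, if_neg (by tauto)]
    · rw [(key s).2 j (by omega), if_neg (by tauto)]
  · rw [pow_one, hsumred R _ j hj sqHighR, sq1R, zero_mul, add_zero]
    rw [if_neg (by simp : ¬ (j = 1 ∧ 1 = 0 ∧ Odd s.card))]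
    by_cases hj1 : j = 1
    · subst hj1
      rw [(key s).1, hsmul]
      by_cases hc : Odd s.card
      · rw [if_pos hc]
        have : R * (R * ∏ i ∈ s, V i) = (R * R) * ∏ i ∈ s, V i := by ring
        rw [this, hR2, zero_mul]
      · rw [if_neg hc, mul_zero]
    · rw [(key s).2 j (by omega), mul_zero]
end
end
end

section
/- If $n$ is odd, the tangent bundle $\tau(K_n)$ is isomorphic to the trivial rank-$n$ real vector bundle. If $n$ is even, then $\tau(K_n) \cong \eta \oplus (n-1)\varepsilon$, where $\varepsilon$ is the trivial line bundle and $\eta$ is the real line bundle associated to the double cover $(S^1)^n \to K_n$ (so $w_1(\eta) = R$), and moreover $\tau(K_n) \oplus \tau(K_n)$ is isomorphic to the trivial rank-$2n$ bundle. -/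
noncomputable section

/-- The differential of the Klein involution in the standard (invariant) trivialization
of the tangent bundle of the torus: `(t₁,…,tₙ) ↦ (-t₁,…,-t_{n-1},tₙ)`. -/
def dKleinInvolution (n : ℕ) (t : Fin n → ℝ) : Fin n → ℝ :=
  fun i => if (i : ℕ) + 1 = n then t i else -t i

/-- The relation defining the total space of the tangent bundle `τ(Kₙ)`, as the quotient
of `T((S¹)ⁿ) = (S¹)ⁿ × ℝⁿ` by the differential of the Klein involution. -/
def TangentRel (n : ℕ) (p q : Torus n × (Fin n → ℝ)) : Prop :=
  q = (kleinInvolution n p.1, dKleinInvolution n p.2)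

/-- The total space of `τ(Kₙ)`. -/
def KleinTangent (n : ℕ) : Type := Quot (TangentRel n)

instance (n : ℕ) : TopologicalSpace (KleinTangent n) := instTopologicalSpaceQuot

/-- The relation defining the total space of `η ⊕ (n-1)ε`, where `η` is the line bundle
associated to the double cover (total space `(ℝ × (S¹)ⁿ)/((t,z) ∼ (-t, τz))`) and `ε` is
the trivial line bundle. -/
def EtaPlusTrivialRel (n : ℕ) (p q : Torus n × (ℝ × (Fin (n - 1) → ℝ))) : Prop :=
  q = (kleinInvolution n p.1, (-p.2.1, p.2.2))

/-- The total space of `η ⊕ (n-1)ε`. -/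
def EtaPlusTrivial (n : ℕ) : Type := Quot (EtaPlusTrivialRel n)

instance (n : ℕ) : TopologicalSpace (EtaPlusTrivial n) := instTopologicalSpaceQuot

/-- The relation defining the total space of `τ(Kₙ) ⊕ τ(Kₙ)`. -/
def DoubleTangentRel (n : ℕ) (p q : Torus n × ((Fin n → ℝ) × (Fin n → ℝ))) : Prop :=
  q = (kleinInvolution n p.1, (dKleinInvolution n p.2.1, dKleinInvolution n p.2.2))

/-- The total space of `τ(Kₙ) ⊕ τ(Kₙ)`. -/
def DoubleTangent (n : ℕ) : Type := Quot (DoubleTangentRel n)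

instance (n : ℕ) : TopologicalSpace (DoubleTangent n) := instTopologicalSpaceQuot

namespace KleinAux

lemma val_mk' {m k : ℕ} (h : k < m) : ((⟨k, h⟩ : Fin m) : ℕ) = k := rfl

lemma circle_neg_coe (z : Circle) : ((Circle.neg z : Circle) : ℂ) = -(z : ℂ) := rfl

lemma kI_invol (n : ℕ) : Function.Involutive (kleinInvolution n) := by
  intro z; funext i
  simp only [kleinInvolution]
  split_ifs with h
  · exact Subtype.ext (neg_neg _)
  · exact Subtype.ext (Complex.conj_conj _)

lemma continuous_circle_neg : Continuous Circle.neg :=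
  Continuous.subtype_mk (continuous_neg.comp continuous_subtype_val) _

lemma continuous_circle_conj : Continuous Circle.conj :=
  Continuous.subtype_mk (Complex.continuous_conj.comp continuous_subtype_val) _

lemma continuous_kI (n : ℕ) : Continuous (kleinInvolution n) := by
  refine continuous_pi fun i => ?_
  by_cases h : (i : ℕ) + 1 = n
  · simp only [kleinInvolution, if_pos h]
    exact continuous_circle_neg.comp (continuous_apply i)
  · simp only [kleinInvolution, if_neg h]
    exact continuous_circle_conj.comp (continuous_apply i)

lemma klein_mk_eq {n : ℕ} {x y : Torus n} :
    Quot.mk (KleinRel n) x = Quot.mk (KleinRel n) y ↔ y = x ∨ y = kleinInvolution n x := by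
  constructor
  · intro h
    have h' := Quot.eqvGen_exact h
    clear h
    induction h' with
    | rel a b hab => exact Or.inr hab
    | refl a => exact Or.inl rfl
    | symm a b _ ih =>
        rcases ih with h1 | h1
        · exact Or.inl h1.symm
        · right; rw [h1]; exact (kI_invol n a).symm
    | trans a b c _ _ ih1 ih2 =>
        rcases ih1 with h1 | h1 <;> rcases ih2 with h2 | h2
        · exact Or.inl (h2.trans h1)
        · right; rw [h2, h1]
        · right; rw [h2, ← h1]
        · left; rw [h2, h1]; exact kI_invol n a
  · rintro (rfl | h)
    · rfl
    · exact Quot.sound (show KleinRel n x y from h)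

lemma isOpenQuotientMap_kleinMk (n : ℕ) : IsOpenQuotientMap (Quot.mk (KleinRel n)) := by
  refine ⟨Quot.mk_surjective, continuous_quot_mk, ?_⟩
  intro U hU
  have key : Quot.mk (KleinRel n) ⁻¹' (Quot.mk (KleinRel n) '' U)
      = U ∪ (kleinInvolution n) ⁻¹' U := by
    ext x
    simp only [Set.mem_preimage, Set.mem_image, Set.mem_union]
    constructor
    · rintro ⟨y, hy, hxy⟩
      rcases klein_mk_eq.mp hxy with rfl | h
      · exact Or.inl hy
      · right
        have : y = kleinInvolution n x := by rw [h]; exact (kI_invol n y).symm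
        rwa [← this]
    · rintro (h | h)
      · exact ⟨x, h, rfl⟩
      · refine ⟨kleinInvolution n x, h, ?_⟩
        exact (Quot.sound (show KleinRel n x (kleinInvolution n x) from rfl)).symm
  rw [← isQuotientMap_quot_mk.isOpen_preimage, key]
  exact hU.union ((continuous_kI n).isOpen_preimage U hU)

section Generic

variable {n : ℕ} {V W : Type} [TopologicalSpace V] [TopologicalSpace W]

lemma quotHomeo (R : Torus n × V → Torus n × V → Prop) (R' : Torus n × W → Torus n × W → Prop)
    {J : V → V} {J' : W → W}
    (hR : ∀ p q, R p q ↔ q = (kleinInvolution n p.1, J p.2))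
    (hR' : ∀ p q, R' p q ↔ q = (kleinInvolution n p.1, J' p.2))
    (F : Torus n → V → W) (G : Torus n → W → V)
    (hGF : ∀ z v, G z (F z v) = v) (hFG : ∀ z w, F z (G z w) = w)
    (hE : ∀ z v, F (kleinInvolution n z) (J v) = J' (F z v))
    (hFc : Continuous fun p : Torus n × V => F p.1 p.2)
    (hGc : Continuous fun p : Torus n × W => G p.1 p.2) :
    ∃ e : Quot R ≃ₜ Quot R', ∀ z v, e (Quot.mk R (z, v)) = Quot.mk R' (z, F z v) := by
  have hE' : ∀ z w, G (kleinInvolution n z) (J' w) = J (G z w) := by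
    intro z w
    have h1 : F (kleinInvolution n z) (J (G z w)) = J' w := by rw [hE, hFG]
    calc G (kleinInvolution n z) (J' w)
        = G (kleinInvolution n z) (F (kleinInvolution n z) (J (G z w))) := by rw [h1]
      _ = J (G z w) := hGF _ _
  have hf : ∀ p q, R p q → Quot.mk R' (p.1, F p.1 p.2) = Quot.mk R' (q.1, F q.1 q.2) := by
    intro p q hpq
    rw [hR] at hpq; subst hpq
    exact Quot.sound ((hR' _ _).mpr (by rw [hE]))
  have hg : ∀ p q, R' p q → Quot.mk R (p.1, G p.1 p.2) = Quot.mk R (q.1, G q.1 q.2) := by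
    intro p q hpq
    rw [hR'] at hpq; subst hpq
    exact Quot.sound ((hR _ _).mpr (by rw [hE']))
  refine ⟨{ toFun := Quot.lift (fun p => Quot.mk R' (p.1, F p.1 p.2)) hf,
            invFun := Quot.lift (fun p => Quot.mk R (p.1, G p.1 p.2)) hg,
            left_inv := ?_, right_inv := ?_,
            continuous_toFun := continuous_quot_lift _
              (continuous_quot_mk.comp (continuous_fst.prodMk hFc)),
            continuous_invFun := continuous_quot_lift _
              (continuous_quot_mk.comp (continuous_fst.prodMk hGc)) },
        fun z v => rfl⟩
  · intro q
    induction q using Quot.ind with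
    | _ p =>
      show Quot.mk R (p.1, G p.1 (F p.1 p.2)) = Quot.mk R p
      have h2 : (p.1, G p.1 (F p.1 p.2)) = p := by rw [hGF]
      rw [h2]
  · intro q
    induction q using Quot.ind with
    | _ p =>
      show Quot.mk R' (p.1, F p.1 (G p.1 p.2)) = Quot.mk R' p
      have h2 : (p.1, F p.1 (G p.1 p.2)) = p := by rw [hFG]
      rw [h2]

lemma quotHomeoProd (R : Torus n × V → Torus n × V → Prop) {J : V → V}
    (hR : ∀ p q, R p q ↔ q = (kleinInvolution n p.1, J p.2))
    (F G : Torus n → V → V)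
    (hGF : ∀ z v, G z (F z v) = v) (hFG : ∀ z w, F z (G z w) = w)
    (hE : ∀ z v, F (kleinInvolution n z) (J v) = F z v)
    (hFc : Continuous fun p : Torus n × V => F p.1 p.2)
    (hGc : Continuous fun p : Torus n × V => G p.1 p.2) :
    ∃ e : Quot R ≃ₜ Klein n × V,
      ∀ z v, e (Quot.mk R (z, v)) = (Quot.mk (KleinRel n) z, F z v) := by
  have hE' : ∀ z w, G (kleinInvolution n z) w = J (G z w) := by
    intro z w
    have h1 : F (kleinInvolution n z) (J (G z w)) = w := by rw [hE, hFG]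
    calc G (kleinInvolution n z) w
        = G (kleinInvolution n z) (F (kleinInvolution n z) (J (G z w))) := by rw [h1]
      _ = J (G z w) := hGF _ _
  have hf : ∀ p q, R p q →
      (Quot.mk (KleinRel n) p.1, F p.1 p.2) = (Quot.mk (KleinRel n) q.1, F q.1 q.2) := by
    intro p q hpq
    rw [hR] at hpq; subst hpq
    refine Prod.ext_iff.mpr ⟨?_, ?_⟩
    · exact Quot.sound (show KleinRel n p.1 (kleinInvolution n p.1) from rfl)
    · exact (hE _ _).symm
  have hg : ∀ (w : V) (z z' : Torus n), KleinRel n z z' →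
      Quot.mk R (z, G z w) = Quot.mk R (z', G z' w) := by
    intro w z z' hzz'
    have hz : z' = kleinInvolution n z := hzz'
    subst hz
    refine Quot.sound ((hR _ _).mpr ?_)
    rw [hE']
  refine ⟨{ toFun := Quot.lift (fun p => (Quot.mk (KleinRel n) p.1, F p.1 p.2)) hf,
            invFun := fun pw => Quot.lift (fun z => Quot.mk R (z, G z pw.2)) (hg pw.2) pw.1,
            left_inv := ?_, right_inv := ?_,
            continuous_toFun := continuous_quot_lift _
              ((continuous_quot_mk.comp continuous_fst).prodMk hFc),
            continuous_invFun := ?_ },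
        fun z v => rfl⟩
  · intro q
    induction q using Quot.ind with
    | _ p =>
      show Quot.mk R (p.1, G p.1 (F p.1 p.2)) = Quot.mk R p
      have h2 : (p.1, G p.1 (F p.1 p.2)) = p := by rw [hGF]
      rw [h2]
  · rintro ⟨q, w⟩
    induction q using Quot.ind with
    | _ z =>
      show (Quot.mk (KleinRel n) z, F z (G z w)) = (Quot.mk (KleinRel n) z, w)
      rw [hFG]
  · have hoq : IsOpenQuotientMap (Prod.map (Quot.mk (KleinRel n)) (id : V → V)) :=
      (isOpenQuotientMap_kleinMk n).prodMap .id
    refine hoq.isQuotientMap.continuous_iff.mpr ?_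
    have heq : ((fun pw : Klein n × V =>
          Quot.lift (fun z => Quot.mk R (z, G z pw.2)) (hg pw.2) pw.1) ∘
        Prod.map (Quot.mk (KleinRel n)) (id : V → V))
        = fun p : Torus n × V => Quot.mk R (p.1, G p.1 p.2) := rfl
    show Continuous (fun p : Torus n × V => Quot.mk R (p.1, G p.1 p.2))
    exact continuous_quot_mk.comp (continuous_fst.prodMk hGc)

end Generic

/-! ### The rotation machinery -/

/-- extend a vector by zero to all of `ℕ` -/
def extF {m : ℕ} (t : Fin m → ℝ) (k : ℕ) : ℝ := if h : k < m then t ⟨k, h⟩ else 0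

lemma extF_coe {m : ℕ} (t : Fin m → ℝ) (i : Fin m) : extF t ↑i = t i := by
  simp [extF, i.isLt]

lemma extF_add {m : ℕ} (t s : Fin m → ℝ) (k : ℕ) : extF (t + s) k = extF t k + extF s k := by
  unfold extF; split_ifs
  · rfl
  · simp

lemma extF_smul {m : ℕ} (r : ℝ) (t : Fin m → ℝ) (k : ℕ) : extF (r • t) k = r * extF t k := by
  unfold extF; split_ifs
  · rfl
  · simp

lemma continuous_extF {m : ℕ} {X : Type*} [TopologicalSpace X] {f : X → Fin m → ℝ}
    (hf : Continuous f) (k : ℕ) : Continuous fun x => extF (f x) k := by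
  by_cases h : k < m
  · simp only [extF, dif_pos h]
    exact (continuous_apply _).comp hf
  · simp only [extF, dif_neg h]
    exact continuous_const

/-- rotation by `a + b i` on consecutive pairs of coordinates -/
def rot2 (a b : ℝ) (f : ℕ → ℝ) (k : ℕ) : ℝ :=
  if k % 2 = 0 then a * f k - b * f (k + 1) else b * f (k - 1) + a * f k

lemma rot2_congr {a b : ℝ} {f g : ℕ → ℝ} {k : ℕ} (h0 : f k = g k)
    (he : k % 2 = 0 → f (k + 1) = g (k + 1)) (ho : k % 2 ≠ 0 → f (k - 1) = g (k - 1)) :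
    rot2 a b f k = rot2 a b g k := by
  unfold rot2; split_ifs with h
  · rw [h0, he h]
  · rw [h0, ho h]

lemma rot2_inv {a b : ℝ} (hab : a ^ 2 + b ^ 2 = 1) (f : ℕ → ℝ) (k : ℕ) :
    rot2 a (-b) (fun j => rot2 a b f j) k = f k := by
  by_cases h : k % 2 = 0
  · have h1 : (k + 1) % 2 ≠ 0 := by omega
    simp only [rot2, if_pos h, if_neg h1, Nat.add_sub_cancel]
    linear_combination f k * hab
  · have h1 : (k - 1) % 2 = 0 := by omega
    have h2 : k - 1 + 1 = k := by omega
    simp only [rot2, if_pos h1, if_neg h, h2]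
    linear_combination f k * hab

lemma rot2_inv' {a b : ℝ} (hab : a ^ 2 + b ^ 2 = 1) (f : ℕ → ℝ) (k : ℕ) :
    rot2 a b (fun j => rot2 a (-b) f j) k = f k := by
  have h := rot2_inv (a := a) (b := -b) (by rw [neg_pow]; ring_nf; linarith) f k
  rwa [neg_neg] at h

lemma rot2_neg {a b : ℝ} (f : ℕ → ℝ) (k : ℕ) :
    rot2 (-a) (-b) (fun j => -f j) k = rot2 a b f k := by
  unfold rot2; split_ifs <;> ring

lemma rot2_addf {a b : ℝ} (f g : ℕ → ℝ) (k : ℕ) :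
    rot2 a b (fun j => f j + g j) k = rot2 a b f k + rot2 a b g k := by
  unfold rot2; split_ifs <;> ring

lemma rot2_smulf {a b r : ℝ} (f : ℕ → ℝ) (k : ℕ) :
    rot2 a b (fun j => r * f j) k = r * rot2 a b f k := by
  unfold rot2; split_ifs <;> ring

lemma continuous_rot2 {X : Type*} [TopologicalSpace X] {A B : X → ℝ} {f : X → ℕ → ℝ}
    (hA : Continuous A) (hB : Continuous B) (hf : ∀ k, Continuous fun x => f x k) (k : ℕ) :
    Continuous fun x => rot2 (A x) (B x) (f x) k := by
  by_cases h : k % 2 = 0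
  · simp only [rot2, if_pos h]
    exact (hA.mul (hf k)).sub (hB.mul (hf (k + 1)))
  · simp only [rot2, if_neg h]
    exact (hB.mul (hf (k - 1))).add (hA.mul (hf k))

lemma extF_dK {n : ℕ} {t : Fin n → ℝ} {j : ℕ} (h2 : j + 1 ≠ n) :
    extF (dKleinInvolution n t) j = -extF t j := by
  by_cases h : j < n
  · simp only [extF, dif_pos h, dKleinInvolution, val_mk', if_neg h2]
  · simp [extF, h]

lemma extF_dK_last {n : ℕ} {t : Fin n → ℝ} (hn : 1 ≤ n) :
    extF (dKleinInvolution n t) (n - 1) = extF t (n - 1) := by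
  have h : n - 1 < n := by omega
  simp only [extF, dif_pos h, dKleinInvolution, val_mk', if_pos (by omega : n - 1 + 1 = n)]

/-! ### The odd-dimensional trivialization -/

def Fodd (n : ℕ) (a b : ℝ) (t : Fin n → ℝ) : Fin n → ℝ :=
  fun i => if (i : ℕ) + 1 = n then t i else rot2 a b (extF t) ↑i

lemma extF_Fodd {n : ℕ} {a b : ℝ} {t : Fin n → ℝ} {j : ℕ} (h1 : j < n) (h2 : j + 1 ≠ n) :
    extF (Fodd n a b t) j = rot2 a b (extF t) j := by
  simp only [extF, dif_pos h1, Fodd, val_mk', if_neg h2]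

lemma Fodd_inv {n : ℕ} {a b : ℝ} (hodd : n % 2 = 1) (hab : a ^ 2 + b ^ 2 = 1)
    (t : Fin n → ℝ) : Fodd n a (-b) (Fodd n a b t) = t := by
  funext i
  by_cases h : (i : ℕ) + 1 = n
  · simp only [Fodd, if_pos h]
  · have hi : (i : ℕ) < n := i.isLt
    simp only [Fodd, if_neg h]
    rw [rot2_congr (extF_Fodd hi h)
        (fun hp => extF_Fodd (by omega) (by omega))
        (fun hp => extF_Fodd (by omega) (by omega)),
      rot2_inv hab, extF_coe]

lemma Fodd_equiv {n : ℕ} {a b : ℝ} (hodd : n % 2 = 1) (t : Fin n → ℝ) :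
    Fodd n (-a) (-b) (dKleinInvolution n t) = Fodd n a b t := by
  funext i
  have hi : (i : ℕ) < n := i.isLt
  by_cases h : (i : ℕ) + 1 = n
  · simp only [Fodd, if_pos h, dKleinInvolution, if_pos h]
  · simp only [Fodd, if_neg h]
    rw [rot2_congr (g := fun k => -extF t k) (extF_dK h)
        (fun hp => extF_dK (by omega))
        (fun hp => extF_dK (by omega)),
      rot2_neg]

lemma Fodd_add {n : ℕ} {a b : ℝ} (t s : Fin n → ℝ) :
    Fodd n a b (t + s) = Fodd n a b t + Fodd n a b s := by
  funext i
  by_cases h : (i : ℕ) + 1 = n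
  · simp [Fodd, h]
  · simp only [Pi.add_apply, Fodd, if_neg h]
    rw [rot2_congr (g := fun k => extF t k + extF s k) (extF_add t s ↑i) (fun _ => extF_add t s _) (fun _ => extF_add t s _),
      rot2_addf]

lemma Fodd_smul {n : ℕ} {a b : ℝ} (r : ℝ) (t : Fin n → ℝ) :
    Fodd n a b (r • t) = r • Fodd n a b t := by
  funext i
  by_cases h : (i : ℕ) + 1 = n
  · simp [Fodd, h]
  · simp only [Pi.smul_apply, Fodd, if_neg h, smul_eq_mul]
    rw [rot2_congr (g := fun k => r * extF t k) (extF_smul r t ↑i) (fun _ => extF_smul r t _) (fun _ => extF_smul r t _),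
      rot2_smulf]

lemma continuous_Fodd {n : ℕ} {X : Type*} [TopologicalSpace X] {A B : X → ℝ}
    {f : X → Fin n → ℝ} (hA : Continuous A) (hB : Continuous B) (hf : Continuous f) :
    Continuous fun x => Fodd n (A x) (B x) (f x) := by
  refine continuous_pi fun i => ?_
  by_cases h : (i : ℕ) + 1 = n
  · simp only [Fodd, if_pos h]
    exact (continuous_apply i).comp hf
  · simp only [Fodd, if_neg h]
    exact continuous_rot2 hA hB (fun k => continuous_extF hf k) ↑i

/-! ### The even-dimensional splitting -/

def Feven (n : ℕ) (a b : ℝ) (t : Fin n → ℝ) : ℝ × (Fin (n - 1) → ℝ) :=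
  (extF t (n - 2),
   fun j => if (j : ℕ) + 2 = n then extF t (n - 1) else rot2 a b (extF t) ↑j)

def Geven (n : ℕ) (a b : ℝ) (p : ℝ × (Fin (n - 1) → ℝ)) : Fin n → ℝ :=
  fun i => if (i : ℕ) + 1 = n then extF p.2 (n - 2)
    else if (i : ℕ) + 2 = n then p.1
    else rot2 a (-b) (extF p.2) ↑i

lemma extF_Feven {n : ℕ} {a b : ℝ} {t : Fin n → ℝ} {j : ℕ} (h1 : j < n - 1) (h2 : j + 2 ≠ n) :
    extF (Feven n a b t).2 j = rot2 a b (extF t) j := by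
  simp only [extF, dif_pos h1, Feven, val_mk', if_neg h2]

lemma extF_Geven {n : ℕ} {a b : ℝ} {p : ℝ × (Fin (n - 1) → ℝ)} {k : ℕ}
    (h1 : k < n) (h2 : k + 1 ≠ n) (h3 : k + 2 ≠ n) :
    extF (Geven n a b p) k = rot2 a (-b) (extF p.2) k := by
  simp only [extF, dif_pos h1, Geven, val_mk', if_neg h2, if_neg h3]

lemma Geven_Feven {n : ℕ} {a b : ℝ} (heven : n % 2 = 0) (hn2 : 2 ≤ n)
    (hab : a ^ 2 + b ^ 2 = 1) (t : Fin n → ℝ) : Geven n a b (Feven n a b t) = t := by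
  funext i
  have hi : (i : ℕ) < n := i.isLt
  by_cases h1 : (i : ℕ) + 1 = n
  · simp only [Geven, if_pos h1]
    have e1 : extF (Feven n a b t).2 (n - 2) = extF t (n - 1) := by
      simp only [extF, dif_pos (by omega : n - 2 < n - 1), Feven, val_mk',
        if_pos (by omega : n - 2 + 2 = n)]
    rw [e1]
    simp only [extF, dif_pos (by omega : n - 1 < n)]
    exact congrArg t (Fin.ext (by simp [val_mk']; omega))
  · by_cases h2 : (i : ℕ) + 2 = n
    · simp only [Geven, if_neg h1, if_pos h2, Feven]
      simp only [extF, dif_pos (by omega : n - 2 < n)]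
      exact congrArg t (Fin.ext (by simp [val_mk']; omega))
    · simp only [Geven, if_neg h1, if_neg h2]
      rw [rot2_congr (extF_Feven (by omega) h2)
          (fun hp => extF_Feven (by omega) (by omega))
          (fun hp => extF_Feven (by omega) (by omega)),
        rot2_inv hab, extF_coe]

lemma Feven_Geven {n : ℕ} {a b : ℝ} (heven : n % 2 = 0) (hn2 : 2 ≤ n)
    (hab : a ^ 2 + b ^ 2 = 1) (p : ℝ × (Fin (n - 1) → ℝ)) :
    Feven n a b (Geven n a b p) = p := by
  refine Prod.ext_iff.mpr ⟨?_, funext fun j => ?_⟩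
  · show extF (Geven n a b p) (n - 2) = p.1
    simp only [extF, dif_pos (by omega : n - 2 < n), Geven, val_mk',
      if_neg (by omega : ¬(n - 2 + 1 = n)), if_pos (by omega : n - 2 + 2 = n)]
  · have hj : (j : ℕ) < n - 1 := j.isLt
    by_cases h2 : (j : ℕ) + 2 = n
    · simp only [Feven, if_pos h2]
      have e1 : extF (Geven n a b p) (n - 1) = extF p.2 (n - 2) := by
        simp only [extF, dif_pos (by omega : n - 1 < n), Geven, val_mk',
          if_pos (by omega : n - 1 + 1 = n)]
      rw [e1]
      simp only [extF, dif_pos (by omega : n - 2 < n - 1)]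
      exact congrArg p.2 (Fin.ext (by simp [val_mk']; omega))
    · simp only [Feven, if_neg h2]
      show rot2 a b (extF (Geven n a b p)) ↑j = p.2 j
      rw [rot2_congr (extF_Geven (by omega) (by omega) h2)
          (fun hp => extF_Geven (by omega) (by omega) (by omega))
          (fun hp => extF_Geven (by omega) (by omega) (by omega)),
        rot2_inv' hab, extF_coe]

lemma Feven_equiv {n : ℕ} {a b : ℝ} (heven : n % 2 = 0) (hn2 : 2 ≤ n) (t : Fin n → ℝ) :
    Feven n (-a) (-b) (dKleinInvolution n t)
      = (-(Feven n a b t).1, (Feven n a b t).2) := by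
  refine Prod.ext_iff.mpr ⟨?_, funext fun j => ?_⟩
  · show extF (dKleinInvolution n t) (n - 2) = -(extF t (n - 2))
    exact extF_dK (by omega)
  · have hj : (j : ℕ) < n - 1 := j.isLt
    by_cases h2 : (j : ℕ) + 2 = n
    · simp only [Feven, if_pos h2]
      have : n - 1 + 1 = n := by omega
      exact extF_dK_last (by omega)
    · simp only [Feven, if_neg h2]
      rw [rot2_congr (g := fun k => -extF t k) (extF_dK (by omega))
          (fun hp => extF_dK (by omega))
          (fun hp => extF_dK (by omega)),
        rot2_neg]

lemma Feven_add {n : ℕ} {a b : ℝ} (t s : Fin n → ℝ) :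
    Feven n a b (t + s) = Feven n a b t + Feven n a b s := by
  refine Prod.ext_iff.mpr ⟨?_, funext fun j => ?_⟩
  · show extF (t + s) (n - 2) = extF t (n - 2) + extF s (n - 2)
    exact extF_add t s _
  · show (Feven n a b (t + s)).2 j = (Feven n a b t).2 j + (Feven n a b s).2 j
    by_cases h2 : (j : ℕ) + 2 = n
    · simp only [Feven, if_pos h2]
      exact extF_add t s _
    · simp only [Feven, if_neg h2]
      rw [rot2_congr (g := fun k => extF t k + extF s k) (extF_add t s ↑j)
          (fun _ => extF_add t s _) (fun _ => extF_add t s _), rot2_addf]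

lemma Feven_smul {n : ℕ} {a b : ℝ} (r : ℝ) (t : Fin n → ℝ) :
    Feven n a b (r • t) = r • Feven n a b t := by
  refine Prod.ext_iff.mpr ⟨?_, funext fun j => ?_⟩
  · show extF (r • t) (n - 2) = r • extF t (n - 2)
    rw [extF_smul]; rfl
  · show (Feven n a b (r • t)).2 j = r • (Feven n a b t).2 j
    by_cases h2 : (j : ℕ) + 2 = n
    · simp only [Feven, if_pos h2, smul_eq_mul]
      exact extF_smul r t _
    · simp only [Feven, if_neg h2, smul_eq_mul]
      rw [rot2_congr (g := fun k => r * extF t k) (extF_smul r t ↑j)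
          (fun _ => extF_smul r t _) (fun _ => extF_smul r t _), rot2_smulf]

lemma continuous_Feven {n : ℕ} {X : Type*} [TopologicalSpace X] {A B : X → ℝ}
    {f : X → Fin n → ℝ} (hA : Continuous A) (hB : Continuous B) (hf : Continuous f) :
    Continuous fun x => Feven n (A x) (B x) (f x) := by
  refine Continuous.prodMk (continuous_extF hf _) (continuous_pi fun j => ?_)
  by_cases h2 : (j : ℕ) + 2 = n
  · simp only [Feven, if_pos h2]
    exact continuous_extF hf _
  · simp only [Feven, if_neg h2]
    exact continuous_rot2 hA hB (fun k => continuous_extF hf k) ↑j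

lemma continuous_Geven {n : ℕ} {X : Type*} [TopologicalSpace X] {A B : X → ℝ}
    {g : X → ℝ × (Fin (n - 1) → ℝ)} (hA : Continuous A) (hB : Continuous B)
    (hg : Continuous g) : Continuous fun x => Geven n (A x) (B x) (g x) := by
  refine continuous_pi fun i => ?_
  by_cases h1 : (i : ℕ) + 1 = n
  · simp only [Geven, if_pos h1]
    exact continuous_extF hg.snd _
  · by_cases h2 : (i : ℕ) + 2 = n
    · simp only [Geven, if_neg h1, if_pos h2]
      exact hg.fst
    · simp only [Geven, if_neg h1, if_neg h2]
      exact continuous_rot2 hA hB.neg (fun k => continuous_extF hg.snd k) ↑i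

/-! ### The doubled tangent bundle -/

def Fdbl (n : ℕ) (a b : ℝ) (p : (Fin n → ℝ) × (Fin n → ℝ)) :
    (Fin n → ℝ) × (Fin n → ℝ) :=
  (fun i => if (i : ℕ) + 1 = n then p.1 i else a * p.1 i - b * p.2 i,
   fun i => if (i : ℕ) + 1 = n then p.2 i else b * p.1 i + a * p.2 i)

lemma Fdbl_inv {n : ℕ} {a b : ℝ} (hab : a ^ 2 + b ^ 2 = 1)
    (p : (Fin n → ℝ) × (Fin n → ℝ)) : Fdbl n a (-b) (Fdbl n a b p) = p := by
  refine Prod.ext_iff.mpr ⟨funext fun i => ?_, funext fun i => ?_⟩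
  · by_cases h : (i : ℕ) + 1 = n
    · simp only [Fdbl, if_pos h]
    · simp only [Fdbl, if_neg h]
      linear_combination p.1 i * hab
  · by_cases h : (i : ℕ) + 1 = n
    · simp only [Fdbl, if_pos h]
    · simp only [Fdbl, if_neg h]
      linear_combination p.2 i * hab

lemma Fdbl_equiv {n : ℕ} {a b : ℝ} (p : (Fin n → ℝ) × (Fin n → ℝ)) :
    Fdbl n (-a) (-b) (dKleinInvolution n p.1, dKleinInvolution n p.2) = Fdbl n a b p := by
  refine Prod.ext_iff.mpr ⟨funext fun i => ?_, funext fun i => ?_⟩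
  · by_cases h : (i : ℕ) + 1 = n
    · simp only [Fdbl, dKleinInvolution, if_pos h]
    · simp only [Fdbl, dKleinInvolution, if_neg h]
      ring
  · by_cases h : (i : ℕ) + 1 = n
    · simp only [Fdbl, dKleinInvolution, if_pos h]
    · simp only [Fdbl, dKleinInvolution, if_neg h]
      ring

lemma Fdbl_add {n : ℕ} {a b : ℝ} (p q : (Fin n → ℝ) × (Fin n → ℝ)) :
    Fdbl n a b (p + q) = Fdbl n a b p + Fdbl n a b q := by
  refine Prod.ext_iff.mpr ⟨funext fun i => ?_, funext fun i => ?_⟩ <;>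
      by_cases h : (i : ℕ) + 1 = n
  · simp only [Fdbl, Prod.fst_add, Pi.add_apply, if_pos h]
  · simp only [Fdbl, Prod.fst_add, Prod.snd_add, Pi.add_apply, if_neg h]; ring
  · simp only [Fdbl, Prod.snd_add, Pi.add_apply, if_pos h]
  · simp only [Fdbl, Prod.fst_add, Prod.snd_add, Pi.add_apply, if_neg h]; ring

lemma Fdbl_smul {n : ℕ} {a b : ℝ} (r : ℝ) (p : (Fin n → ℝ) × (Fin n → ℝ)) :
    Fdbl n a b (r • p) = r • Fdbl n a b p := by
  refine Prod.ext_iff.mpr ⟨funext fun i => ?_, funext fun i => ?_⟩ <;>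
      by_cases h : (i : ℕ) + 1 = n
  · simp only [Fdbl, Prod.smul_fst, Pi.smul_apply, smul_eq_mul, if_pos h]
  · simp only [Fdbl, Prod.smul_fst, Prod.smul_snd, Pi.smul_apply, smul_eq_mul, if_neg h]; ring
  · simp only [Fdbl, Prod.smul_snd, Pi.smul_apply, smul_eq_mul, if_pos h]
  · simp only [Fdbl, Prod.smul_fst, Prod.smul_snd, Pi.smul_apply, smul_eq_mul, if_neg h]; ring

lemma continuous_Fdbl {n : ℕ} {X : Type*} [TopologicalSpace X] {A B : X → ℝ}
    {f : X → (Fin n → ℝ) × (Fin n → ℝ)} (hA : Continuous A) (hB : Continuous B)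
    (hf : Continuous f) : Continuous fun x => Fdbl n (A x) (B x) (f x) := by
  have h1 : ∀ i : Fin n, Continuous fun x => (f x).1 i :=
    fun i => (continuous_apply i).comp hf.fst
  have h2 : ∀ i : Fin n, Continuous fun x => (f x).2 i :=
    fun i => (continuous_apply i).comp hf.snd
  refine Continuous.prodMk (continuous_pi fun i => ?_) (continuous_pi fun i => ?_)
  · by_cases h : (i : ℕ) + 1 = n
    · simp only [Fdbl, if_pos h]; exact h1 i
    · simp only [Fdbl, if_neg h]; exact ((hA.mul (h1 i)).sub (hB.mul (h2 i)))
  · by_cases h : (i : ℕ) + 1 = n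
    · simp only [Fdbl, if_pos h]; exact h2 i
    · simp only [Fdbl, if_neg h]; exact ((hB.mul (h1 i)).add (hA.mul (h2 i)))

/-! ### Linear equivalences -/

def oddEquiv (n : ℕ) (a b : ℝ) (hodd : n % 2 = 1) (hab : a ^ 2 + b ^ 2 = 1) :
    (Fin n → ℝ) ≃ₗ[ℝ] (Fin n → ℝ) where
  toFun := Fodd n a b
  map_add' := Fodd_add
  map_smul' := Fodd_smul
  invFun := Fodd n a (-b)
  left_inv t := Fodd_inv hodd hab t
  right_inv t := by
    have h := Fodd_inv (a := a) (b := -b) hodd (by rw [neg_pow]; ring_nf; linarith) t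
    rwa [neg_neg] at h

def evenEquiv (n : ℕ) (a b : ℝ) (heven : n % 2 = 0) (hn2 : 2 ≤ n)
    (hab : a ^ 2 + b ^ 2 = 1) : (Fin n → ℝ) ≃ₗ[ℝ] ℝ × (Fin (n - 1) → ℝ) where
  toFun := Feven n a b
  map_add' := Feven_add
  map_smul' := Feven_smul
  invFun := Geven n a b
  left_inv t := Geven_Feven heven hn2 hab t
  right_inv p := Feven_Geven heven hn2 hab p

def dblEquiv (n : ℕ) (a b : ℝ) (hab : a ^ 2 + b ^ 2 = 1) :
    ((Fin n → ℝ) × (Fin n → ℝ)) ≃ₗ[ℝ] ((Fin n → ℝ) × (Fin n → ℝ)) where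
  toFun := Fdbl n a b
  map_add' := Fdbl_add
  map_smul' := Fdbl_smul
  invFun := Fdbl n a (-b)
  left_inv p := Fdbl_inv hab p
  right_inv p := by
    have h := Fdbl_inv (a := a) (b := -b) (by rw [neg_pow]; ring_nf; linarith) p
    rwa [neg_neg] at h

lemma circle_sq (z : Circle) : (z : ℂ).re ^ 2 + (z : ℂ).im ^ 2 = 1 := by
  have h := Circle.normSq_coe z
  rw [Complex.normSq_apply] at h
  rw [sq, sq]
  exact h

end KleinAux

open KleinAux

/-- If `n` is odd, the tangent bundle `τ(Kₙ)` is trivial; if `n` is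
even, `τ(Kₙ) ≅ η ⊕ (n-1)ε` where `η` is the line bundle associated to the double cover
`(S¹)ⁿ → Kₙ`, and `τ(Kₙ) ⊕ τ(Kₙ)` is trivial.  (Bundle isomorphisms are homeomorphisms
of total spaces over `Kₙ` which are linear on each fiber.) -/
theorem klein_tangent_bundle (n : ℕ) (hn : 1 ≤ n) :
    (Odd n →
      ∃ (e : KleinTangent n ≃ₜ Klein n × (Fin n → ℝ))
        (F : (z : Torus n) → (Fin n → ℝ) ≃ₗ[ℝ] (Fin n → ℝ)),
        ∀ (z : Torus n) (t : Fin n → ℝ),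
          e (Quot.mk (TangentRel n) (z, t)) = (Quot.mk (KleinRel n) z, F z t)) ∧
    (Even n →
      (∃ (e : KleinTangent n ≃ₜ EtaPlusTrivial n)
        (F : (z : Torus n) → (Fin n → ℝ) ≃ₗ[ℝ] (ℝ × (Fin (n - 1) → ℝ))),
        ∀ (z : Torus n) (t : Fin n → ℝ),
          e (Quot.mk (TangentRel n) (z, t)) =
            Quot.mk (EtaPlusTrivialRel n) (z, F z t)) ∧
      (∃ (e : DoubleTangent n ≃ₜ Klein n × ((Fin n → ℝ) × (Fin n → ℝ)))
        (F : (z : Torus n) → ((Fin n → ℝ) × (Fin n → ℝ)) ≃ₗ[ℝ] ((Fin n → ℝ) × (Fin n → ℝ))),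
        ∀ (z : Torus n) (t : (Fin n → ℝ) × (Fin n → ℝ)),
          e (Quot.mk (DoubleTangentRel n) (z, t)) = (Quot.mk (KleinRel n) z, F z t))) := by
  have hlt : n - 1 < n := by omega
  set L : Fin n := ⟨n - 1, hlt⟩ with hLdef
  have hab : ∀ z : Torus n, ((z L : ℂ)).re ^ 2 + ((z L : ℂ)).im ^ 2 = 1 :=
    fun z => circle_sq _
  have hkL : ∀ z : Torus n, ((kleinInvolution n z L : ℂ)) = -(z L : ℂ) := by
    intro z
    have h1 : kleinInvolution n z L = (z L).neg := by
      simp only [kleinInvolution, hLdef, val_mk', if_pos (by omega : n - 1 + 1 = n)]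
    rw [h1]; rfl
  have hare : ∀ z : Torus n, ((kleinInvolution n z L : ℂ)).re = -((z L : ℂ)).re := by
    intro z; rw [hkL]; simp
  have haim : ∀ z : Torus n, ((kleinInvolution n z L : ℂ)).im = -((z L : ℂ)).im := by
    intro z; rw [hkL]; simp
  have hAc : Continuous fun z : Torus n => ((z L : ℂ)).re :=
    Complex.continuous_re.comp (continuous_subtype_val.comp (continuous_apply L))
  have hBc : Continuous fun z : Torus n => ((z L : ℂ)).im :=
    Complex.continuous_im.comp (continuous_subtype_val.comp (continuous_apply L))
  constructor
  · -- odd case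
    intro hodd
    have hodd' : n % 2 = 1 := Nat.odd_iff.mp hodd
    obtain ⟨e, he⟩ := quotHomeoProd (TangentRel n) (J := dKleinInvolution n)
      (fun _ _ => Iff.rfl)
      (fun z => Fodd n ((z L : ℂ)).re ((z L : ℂ)).im)
      (fun z => Fodd n ((z L : ℂ)).re (-((z L : ℂ)).im))
      (fun z v => Fodd_inv hodd' (hab z) v)
      (fun z w => by
        have h := Fodd_inv (a := ((z L : ℂ)).re) (b := -((z L : ℂ)).im) hodd'
          (by rw [neg_pow]; ring_nf; have := hab z; linarith) w
        rwa [neg_neg] at h)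
      (fun z v => by beta_reduce; rw [hare, haim]; exact Fodd_equiv hodd' v)
      (continuous_Fodd (hAc.comp continuous_fst) (hBc.comp continuous_fst) continuous_snd)
      (continuous_Fodd (hAc.comp continuous_fst) (hBc.comp continuous_fst).neg continuous_snd)
    exact ⟨e, fun z => oddEquiv n ((z L : ℂ)).re ((z L : ℂ)).im hodd' (hab z),
      fun z t => he z t⟩
  · -- even case
    intro heven
    have heven' : n % 2 = 0 := Nat.even_iff.mp heven
    have hn2 : 2 ≤ n := by omega
    constructor
    · obtain ⟨e, he⟩ := quotHomeo (TangentRel n) (EtaPlusTrivialRel n)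
        (J := dKleinInvolution n) (J' := fun w => (-w.1, w.2))
        (fun _ _ => Iff.rfl) (fun _ _ => Iff.rfl)
        (fun z => Feven n ((z L : ℂ)).re ((z L : ℂ)).im)
        (fun z => Geven n ((z L : ℂ)).re ((z L : ℂ)).im)
        (fun z v => Geven_Feven heven' hn2 (hab z) v)
        (fun z w => Feven_Geven heven' hn2 (hab z) w)
        (fun z v => by beta_reduce; rw [hare, haim]; exact Feven_equiv heven' hn2 v)
        (continuous_Feven (hAc.comp continuous_fst) (hBc.comp continuous_fst) continuous_snd)
        (continuous_Geven (hAc.comp continuous_fst) (hBc.comp continuous_fst) continuous_snd)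
      exact ⟨e, fun z => evenEquiv n ((z L : ℂ)).re ((z L : ℂ)).im heven' hn2 (hab z),
        fun z t => he z t⟩
    · obtain ⟨e, he⟩ := quotHomeoProd (DoubleTangentRel n)
        (J := fun p => (dKleinInvolution n p.1, dKleinInvolution n p.2))
        (fun _ _ => Iff.rfl)
        (fun z => Fdbl n ((z L : ℂ)).re ((z L : ℂ)).im)
        (fun z => Fdbl n ((z L : ℂ)).re (-((z L : ℂ)).im))
        (fun z v => Fdbl_inv (hab z) v)
        (fun z w => by
          have h := Fdbl_inv (a := ((z L : ℂ)).re) (b := -((z L : ℂ)).im)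
            (by rw [neg_pow]; ring_nf; have := hab z; linarith) w
          rwa [neg_neg] at h)
        (fun z v => by beta_reduce; rw [hare, haim]; exact Fdbl_equiv v)
        (continuous_Fdbl (hAc.comp continuous_fst) (hBc.comp continuous_fst) continuous_snd)
        (continuous_Fdbl (hAc.comp continuous_fst) (hBc.comp continuous_fst).neg continuous_snd)
      exact ⟨e, fun z => dblEquiv n ((z L : ℂ)).re ((z L : ℂ)).im (hab z),
        fun z t => he z t⟩
end
end

section
/- Let $r_1,\ldots,r_{n-1}$ be positive reals with $r_i > \sum_{j>i} r_j$ for each $i$. Define, for $\bar\theta = (\theta_1,\ldots,\theta_{n-1}) \in (\mathbb{R}/2\pi\mathbb{Z})^{n-1}$: $w_n = r_{n-1}$; $w_i = r_{i-1} + w_{i+1}\cos(\theta_i)$ for $1 < i \le n-1$; $x_i = w_i \sin(\theta_{i-1})$ for $1 < i \le n$; and $x_1 = w_2\cos(\theta_1)$. Then $\bar\theta \mapsto (x_1(\bar\theta),\ldots,x_n(\bar\theta))$ is a (topological) embedding of the torus $T^{n-1}$ into $\mathbb{R}^n$ satisfying $x_1(-\bar\theta) = x_1(\bar\theta)$ and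 $x_i(-\bar\theta) = -x_i(\bar\theta)$ for $2 \le i \le n$, and its maximal first coordinate is $r_1 + \cdots + r_{n-1}$. -/
noncomputable section

/-- `nestedW n r θ k` is the quantity `w_{n-k}` of Lemma `emb`:
`w_n = r_{n-1}` and `w_i = r_{i-1} + w_{i+1} cos θ_i` for `1 < i ≤ n-1`. -/
def nestedW (n : ℕ) (r : ℕ → ℝ) (θ : ℕ → Real.Angle) : ℕ → ℝ
  | 0 => r (n - 1)
  | k + 1 => r (n - k - 2) + nestedW n r θ k * (θ (n - k - 1)).cos

/-- `w_i` itself. -/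
def wOf (n : ℕ) (r : ℕ → ℝ) (θ : ℕ → Real.Angle) (i : ℕ) : ℝ := nestedW n r θ (n - i)

/-- The coordinates `x_i`, `1 ≤ i ≤ n`: `x_1 = w_2 cos θ₁` and `x_i = w_i sin θ_{i-1}`. -/
def xCoord (n : ℕ) (r : ℕ → ℝ) (θ : ℕ → Real.Angle) (i : ℕ) : ℝ :=
  if i = 1 then wOf n r θ 2 * (θ 1).cos else wOf n r θ i * (θ (i - 1)).sin

/-- The parametrization of the embedded torus `T^{n-1} ⊆ ℝⁿ` (the `i`-th coordinate,
`0`-indexed, is `x_{i+1}` in terms of the angles `θ₁,…,θ_{n-1}`, `1`-indexed). -/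
def torusEmbedding (n : ℕ) (r : ℕ → ℝ) (θv : Fin (n - 1) → Real.Angle) : Fin n → ℝ :=
  fun i =>
    xCoord n r (fun k => if h : k - 1 < n - 1 ∧ 1 ≤ k then θv ⟨k - 1, h.1⟩ else 0) ((i : ℕ) + 1)

namespace TorusAux

/-- The extension of a `Fin (n-1)`-indexed angle family to `ℕ`. -/
def θF (n : ℕ) (θv : Fin (n - 1) → Real.Angle) : ℕ → Real.Angle :=
  fun k => if h : k - 1 < n - 1 ∧ 1 ≤ k then θv ⟨k - 1, h.1⟩ else 0

lemma torusEmbedding_eq (n : ℕ) (r : ℕ → ℝ) (θv : Fin (n - 1) → Real.Angle) (i : Fin n) :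
    torusEmbedding n r θv i = xCoord n r (θF n θv) ((i : ℕ) + 1) := rfl

lemma angle_cos_sin_inj {φ ψ : Real.Angle} (hc : φ.cos = ψ.cos) (hs : φ.sin = ψ.sin) : φ = ψ := by
  induction φ using Real.Angle.induction_on
  induction ψ using Real.Angle.induction_on
  exact Real.Angle.cos_sin_inj (by simpa [Real.Angle.cos_coe] using hc)
    (by simpa [Real.Angle.sin_coe] using hs)

lemma angle_abs_cos_le_one (φ : Real.Angle) : |φ.cos| ≤ 1 := by
  induction φ using Real.Angle.induction_on
  simpa [Real.Angle.cos_coe] using Real.abs_cos_le_one _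

lemma angle_cos_le_one (φ : Real.Angle) : φ.cos ≤ 1 :=
  le_trans (le_abs_self _) (angle_abs_cos_le_one φ)

lemma wOf_rec (n : ℕ) (r : ℕ → ℝ) (θ : ℕ → Real.Angle) (i : ℕ) (h1 : 1 ≤ i) (h2 : i ≤ n - 1) :
    wOf n r θ i = r (i - 1) + wOf n r θ (i + 1) * (θ i).cos := by
  unfold wOf
  have h : n - i = (n - (i + 1)) + 1 := by omega
  rw [h, nestedW]
  have e1 : n - (n - (i + 1)) - 2 = i - 1 := by omega
  have e2 : n - (n - (i + 1)) - 1 = i := by omega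
  rw [e1, e2]

lemma wOf_last (n : ℕ) (r : ℕ → ℝ) (θ : ℕ → Real.Angle) : wOf n r θ n = r (n - 1) := by
  unfold wOf
  rw [Nat.sub_self, nestedW]

lemma nestedW_bounds (n : ℕ) (hn : 2 ≤ n) (r : ℕ → ℝ)
    (hpos : ∀ i, 1 ≤ i → i ≤ n - 1 → 0 < r i)
    (hdom : ∀ i, 1 ≤ i → i ≤ n - 1 → (∑ j ∈ Finset.Ioc i (n - 1), r j) < r i)
    (θ : ℕ → Real.Angle) :
    ∀ k, k ≤ n - 2 → 0 < nestedW n r θ k ∧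
      nestedW n r θ k ≤ ∑ j ∈ Finset.Icc (n - k - 1) (n - 1), r j := by
  intro k
  induction k with
  | zero =>
    intro _
    refine ⟨hpos (n - 1) (by omega) le_rfl, ?_⟩
    rw [nestedW]
    simp
  | succ k ih =>
    intro hk
    obtain ⟨hp, hle⟩ := ih (by omega)
    have habs : |nestedW n r θ k * (θ (n - k - 1)).cos| ≤ nestedW n r θ k := by
      rw [abs_mul]
      calc |nestedW n r θ k| * |(θ (n - k - 1)).cos| ≤ |nestedW n r θ k| * 1 :=
            mul_le_mul_of_nonneg_left (angle_abs_cos_le_one _) (abs_nonneg _)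
        _ = nestedW n r θ k := by rw [mul_one, abs_of_pos hp]
    have hIoc : Finset.Icc (n - k - 1) (n - 1) = Finset.Ioc (n - k - 2) (n - 1) := by
      rw [← Finset.Icc_add_one_left_eq_Ioc]
      congr 1
      omega
    have hd := hdom (n - k - 2) (by omega) (by omega)
    have hlt : nestedW n r θ k < r (n - k - 2) := by
      calc nestedW n r θ k ≤ ∑ j ∈ Finset.Icc (n - k - 1) (n - 1), r j := hle
        _ = ∑ j ∈ Finset.Ioc (n - k - 2) (n - 1), r j := by rw [hIoc]
        _ < r (n - k - 2) := hd
    rw [nestedW]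
    constructor
    · have := neg_abs_le (nestedW n r θ k * (θ (n - k - 1)).cos)
      linarith
    · have e1 : n - (k + 1) - 1 = n - k - 2 := by omega
      rw [e1, Finset.Icc_eq_cons_Ioc (by omega : n - k - 2 ≤ n - 1), Finset.sum_cons, ← hIoc]
      have := le_abs_self (nestedW n r θ k * (θ (n - k - 1)).cos)
      linarith

lemma wOf_bounds (n : ℕ) (hn : 2 ≤ n) (r : ℕ → ℝ)
    (hpos : ∀ i, 1 ≤ i → i ≤ n - 1 → 0 < r i)
    (hdom : ∀ i, 1 ≤ i → i ≤ n - 1 → (∑ j ∈ Finset.Ioc i (n - 1), r j) < r i)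
    (θ : ℕ → Real.Angle) (i : ℕ) (h2 : 2 ≤ i) (hi : i ≤ n) :
    0 < wOf n r θ i ∧ wOf n r θ i ≤ ∑ j ∈ Finset.Icc (i - 1) (n - 1), r j := by
  have h := nestedW_bounds n hn r hpos hdom θ (n - i) (by omega)
  unfold wOf
  have e : n - (n - i) - 1 = i - 1 := by omega
  rw [e] at h
  exact h

lemma nestedW_zero (n : ℕ) (hn : 2 ≤ n) (r : ℕ → ℝ) :
    ∀ k, k ≤ n - 2 →
      nestedW n r (fun _ => 0) k = ∑ j ∈ Finset.Icc (n - k - 1) (n - 1), r j := by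
  intro k
  induction k with
  | zero =>
    intro _
    rw [nestedW]
    simp
  | succ k ih =>
    intro hk
    rw [nestedW, ih (by omega), Real.Angle.cos_zero, mul_one]
    have hIoc : Finset.Icc (n - k - 1) (n - 1) = Finset.Ioc (n - k - 2) (n - 1) := by
      rw [← Finset.Icc_add_one_left_eq_Ioc]; congr 1; omega
    have e1 : n - (k + 1) - 1 = n - k - 2 := by omega
    rw [e1, hIoc, Finset.Icc_eq_cons_Ioc (by omega : n - k - 2 ≤ n - 1), Finset.sum_cons]

lemma θF_neg (n : ℕ) (θv : Fin (n - 1) → Real.Angle) :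
    θF n (fun i => -θv i) = fun k => -(θF n θv k) := by
  funext k
  unfold θF
  split <;> simp

lemma nestedW_neg (n : ℕ) (r : ℕ → ℝ) (θ : ℕ → Real.Angle) :
    ∀ k, nestedW n r (fun m => -(θ m)) k = nestedW n r θ k := by
  intro k
  induction k with
  | zero => rw [nestedW, nestedW]
  | succ k ih => rw [nestedW, nestedW, ih, Real.Angle.cos_neg]

lemma wOf_neg (n : ℕ) (r : ℕ → ℝ) (θ : ℕ → Real.Angle) (i : ℕ) :
    wOf n r (fun m => -(θ m)) i = wOf n r θ i := nestedW_neg n r θ _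

lemma continuous_θF (n : ℕ) (m : ℕ) :
    Continuous fun θv : Fin (n - 1) → Real.Angle => θF n θv m := by
  unfold θF
  by_cases h : m - 1 < n - 1 ∧ 1 ≤ m
  · simp only [dif_pos h]
    exact continuous_apply _
  · simp only [dif_neg h]
    exact continuous_const

lemma continuous_nestedW (n : ℕ) (r : ℕ → ℝ) (k : ℕ) :
    Continuous fun θv : Fin (n - 1) → Real.Angle => nestedW n r (θF n θv) k := by
  induction k with
  | zero =>
    simp only [nestedW]
    exact continuous_const
  | succ k ih =>
    simp only [nestedW]
    exact continuous_const.add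
      (ih.mul (Real.Angle.continuous_cos.comp (continuous_θF n _)))

/-- Recovering the radius and the angle from `a cos φ` and `a sin φ`. -/
lemma recover {a a' : ℝ} {φ φ' : Real.Angle} (ha : 0 < a) (ha' : 0 < a')
    (hc : a * φ.cos = a' * φ'.cos) (hs : a * φ.sin = a' * φ'.sin) : a = a' ∧ φ = φ' := by
  have hsq : a ^ 2 = a' ^ 2 := by
    have h1 : a ^ 2 = (a * φ.cos) ^ 2 + (a * φ.sin) ^ 2 := by
      have := Real.Angle.cos_sq_add_sin_sq φ
      ring_nf
      nlinarith [Real.Angle.cos_sq_add_sin_sq φ]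
    have h2 : a' ^ 2 = (a' * φ'.cos) ^ 2 + (a' * φ'.sin) ^ 2 := by
      nlinarith [Real.Angle.cos_sq_add_sin_sq φ']
    rw [h1, hc, hs, ← h2]
  have haa : a = a' := by
    nlinarith
  subst haa
  refine ⟨rfl, angle_cos_sin_inj ?_ ?_⟩
  · exact mul_left_cancel₀ ha.ne' hc
  · exact mul_left_cancel₀ ha.ne' hs

end TorusAux

open TorusAux in
/-- For radii `r₁ > r₂ + ⋯ + r_{n-1}`, `r₂ > r₃ + ⋯`, …, the map
`θ̄ ↦ (x₁(θ̄),…,xₙ(θ̄))` is an embedding of `T^{n-1}` into `ℝⁿ`, it is even in the first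
coordinate and odd in the others, and its maximal first coordinate is `r₁ + ⋯ + r_{n-1}`. -/
theorem torusEmbedding_spec (n : ℕ) (hn : 2 ≤ n) (r : ℕ → ℝ)
    (hpos : ∀ i, 1 ≤ i → i ≤ n - 1 → 0 < r i)
    (hdom : ∀ i, 1 ≤ i → i ≤ n - 1 → (∑ j ∈ Finset.Ioc i (n - 1), r j) < r i) :
    Topology.IsEmbedding (torusEmbedding n r) ∧
    (∀ θv : Fin (n - 1) → Real.Angle,
      torusEmbedding n r (fun i => -θv i) ⟨0, by omega⟩ =
        torusEmbedding n r θv ⟨0, by omega⟩) ∧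
    (∀ θv : Fin (n - 1) → Real.Angle, ∀ i : Fin n, 1 ≤ (i : ℕ) →
      torusEmbedding n r (fun i => -θv i) i = -torusEmbedding n r θv i) ∧
    (∀ θv : Fin (n - 1) → Real.Angle,
      torusEmbedding n r θv ⟨0, by omega⟩ ≤ ∑ i ∈ Finset.Icc 1 (n - 1), r i) ∧
    (∃ θv : Fin (n - 1) → Real.Angle,
      torusEmbedding n r θv ⟨0, by omega⟩ = ∑ i ∈ Finset.Icc 1 (n - 1), r i) := by
  haveI : Fact (0 < 2 * Real.pi) := ⟨by positivity⟩
  haveI : CompactSpace Real.Angle := inferInstanceAs (CompactSpace (AddCircle (2 * Real.pi)))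
  -- continuity
  have hcont : Continuous (torusEmbedding n r) := by
    apply continuous_pi
    intro i
    simp only [torusEmbedding_eq, xCoord]
    by_cases h : (i : ℕ) + 1 = 1
    · simp only [if_pos h]
      exact ((continuous_nestedW n r _).mul
        (Real.Angle.continuous_cos.comp (continuous_θF n _)))
    · simp only [if_neg h]
      exact ((continuous_nestedW n r _).mul
        (Real.Angle.continuous_sin.comp (continuous_θF n _)))
  -- injectivity
  have hinj : Function.Injective (torusEmbedding n r) := by
    intro θv θv' heq
    have hx : ∀ m : ℕ, m < n →
        xCoord n r (θF n θv) (m + 1) = xCoord n r (θF n θv') (m + 1) := by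
      intro m hm
      exact congrFun heq ⟨m, hm⟩
    have key : ∀ i, 1 ≤ i → i ≤ n - 1 →
        wOf n r (θF n θv) (i + 1) = wOf n r (θF n θv') (i + 1) ∧
          θF n θv i = θF n θv' i := by
      intro i
      induction i with
      | zero => omega
      | succ i ih =>
        intro _ hle
        have hwpos : 0 < wOf n r (θF n θv) (i + 2) :=
          (wOf_bounds n hn r hpos hdom _ (i + 2) (by omega) (by omega)).1
        have hwpos' : 0 < wOf n r (θF n θv') (i + 2) :=
          (wOf_bounds n hn r hpos hdom _ (i + 2) (by omega) (by omega)).1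
        have hsin : wOf n r (θF n θv) (i + 2) * ((θF n θv) (i + 1)).sin =
            wOf n r (θF n θv') (i + 2) * ((θF n θv') (i + 1)).sin := by
          have := hx (i + 1) (by omega)
          simpa only [xCoord, if_neg (by omega : ¬ (i + 1 + 1 = 1)),
            Nat.add_sub_cancel] using this
        rcases Nat.eq_zero_or_pos i with hi | hi
        · subst hi
          have hcos : wOf n r (θF n θv) 2 * ((θF n θv) 1).cos =
              wOf n r (θF n θv') 2 * ((θF n θv') 1).cos := by
            have := hx 0 (by omega)
            simpa only [xCoord, if_pos rfl, ↓reduceIte] using this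
          have := recover hwpos hwpos' hcos hsin
          exact ⟨this.1, this.2⟩
        · obtain ⟨hw, -⟩ := ih (by omega) (by omega)
          have hrec := wOf_rec n r (θF n θv) (i + 1) (by omega) hle
          have hrec' := wOf_rec n r (θF n θv') (i + 1) (by omega) hle
          have hcos : wOf n r (θF n θv) (i + 2) * ((θF n θv) (i + 1)).cos =
              wOf n r (θF n θv') (i + 2) * ((θF n θv') (i + 1)).cos := by
            have : r (i + 1 - 1) + wOf n r (θF n θv) (i + 1 + 1) * ((θF n θv) (i + 1)).cos =
                r (i + 1 - 1) + wOf n r (θF n θv') (i + 1 + 1) * ((θF n θv') (i + 1)).cos := by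
              rw [← hrec, ← hrec', hw]
            simpa using this
          have := recover hwpos hwpos' hcos hsin
          exact ⟨this.1, this.2⟩
    funext j
    have hj := (key ((j : ℕ) + 1) (by omega) (by omega)).2
    have hcond : (j : ℕ) + 1 - 1 < n - 1 ∧ 1 ≤ (j : ℕ) + 1 := by
      refine ⟨?_, by omega⟩
      simp only [Nat.add_sub_cancel]
      exact j.isLt
    simp only [θF, dif_pos hcond] at hj
    simpa using hj
  refine ⟨hcont.isClosedEmbedding hinj |>.isEmbedding, ?_, ?_, ?_, ?_⟩
  · -- evenness of the first coordinate
    intro θv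
    simp only [torusEmbedding_eq, xCoord, θF_neg, wOf_neg, Real.Angle.cos_neg]
    simp
  · -- oddness of the other coordinates
    intro θv i hi
    simp only [torusEmbedding_eq, xCoord, if_neg (by omega : ¬ ((i : ℕ) + 1 = 1)),
      θF_neg, wOf_neg, Real.Angle.sin_neg, mul_neg]
  · -- upper bound
    intro θv
    simp only [torusEmbedding_eq, xCoord, if_pos rfl]
    obtain ⟨hpos2, hle2⟩ := wOf_bounds n hn r hpos hdom (θF n θv) 2 le_rfl hn
    calc wOf n r (θF n θv) 2 * ((θF n θv) 1).cos ≤ wOf n r (θF n θv) 2 * 1 :=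
          mul_le_mul_of_nonneg_left (angle_cos_le_one _) hpos2.le
      _ = wOf n r (θF n θv) 2 := mul_one _
      _ ≤ ∑ j ∈ Finset.Icc (2 - 1) (n - 1), r j := hle2
      _ = ∑ j ∈ Finset.Icc 1 (n - 1), r j := rfl
  · -- maximum attained at θ = 0
    refine ⟨fun _ => 0, ?_⟩
    have hθ0 : θF n (fun _ => (0 : Real.Angle)) = fun _ => (0 : Real.Angle) := by
      funext k
      unfold θF
      split <;> rfl
    simp only [torusEmbedding_eq, xCoord, hθ0, Real.Angle.cos_zero, mul_one,
      Nat.zero_add, if_pos rfl, eq_self_iff_true, if_true]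
    unfold wOf
    rw [nestedW_zero n hn r (n - 2) (le_rfl)]
    congr 1
    have : n - (n - 2) - 1 = 1 := by omega
    rw [this]
end
end

section
/- If $n$ is odd, then $K_n$ admits a topological embedding into $\mathbb{R}^{n+1}$. -/
noncomputable section

/-! ### Auxiliary constructions for the embedding -/

/-- Iterated tube embedding of the `k`-torus into `ℝ × ℝᵏ`.  The first coordinate is
invariant under componentwise conjugation, while all coordinates of the second
component change sign. -/
def tor : (k : ℕ) → (Fin k → Circle) → ℝ × (Fin k → ℝ)
  | 0, _ => (0, Fin.elim0)
  | (k+1), z =>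
    ((3 ^ k + (tor k (Fin.tail z)).1) * ((z 0 : ℂ)).re,
     Fin.cons ((3 ^ k + (tor k (Fin.tail z)).1) * ((z 0 : ℂ)).im) (tor k (Fin.tail z)).2)

lemma circle_re_sq (u : Circle) : ((u : ℂ)).re ^ 2 + ((u : ℂ)).im ^ 2 = 1 := by
  have h2 : ‖((u : ℂ))‖ = 1 := by
    have := u.2
    exact mem_sphere_zero_iff_norm.1 this
  have := Complex.sq_norm (u : ℂ)
  rw [h2] at this
  simpa [Complex.normSq_apply, sq] using this.symm

lemma circle_abs_re (u : Circle) : |((u : ℂ)).re| ≤ 1 := by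
  nlinarith [circle_re_sq u, sq_nonneg ((u:ℂ)).im, sq_abs ((u:ℂ)).re, abs_nonneg ((u:ℂ)).re]

lemma tor_fst_bound : ∀ (k : ℕ) (z : Fin k → Circle), |(tor k z).1| ≤ 3 ^ k - 1 := by
  intro k
  induction k with
  | zero => intro z; simp [tor]
  | succ k ih =>
    intro z
    have h1 := abs_le.mp (ih (Fin.tail z))
    have h3 := abs_le.mp (circle_abs_re (z 0))
    have hp : (1:ℝ) ≤ 3 ^ k := one_le_pow₀ (by norm_num)
    have hr : (0:ℝ) < 3 ^ k + (tor k (Fin.tail z)).1 := by nlinarith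
    simp only [tor, abs_mul, abs_of_pos hr]
    have h4 : (3:ℝ) ^ (k+1) = 3 * 3 ^ k := by ring
    nlinarith [abs_nonneg ((z 0 : ℂ)).re, circle_abs_re (z 0),
      mul_le_mul_of_nonneg_left (circle_abs_re (z 0)) (le_of_lt hr)]

lemma tor_radius (k : ℕ) (z : Fin k → Circle) : (1:ℝ) ≤ 3 ^ k + (tor k z).1 := by
  have h1 := abs_le.mp (tor_fst_bound k z)
  nlinarith [h1.1]

lemma coe_conj (z : Circle) : ((Circle.conj z : Circle) : ℂ) = starRingEnd ℂ (z : ℂ) := rfl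

lemma coe_neg (z : Circle) : ((Circle.neg z : Circle) : ℂ) = -(z : ℂ) := rfl

lemma tor_conj : ∀ (k : ℕ) (z : Fin k → Circle),
    tor k (fun i => (z i).conj) = ((tor k z).1, fun i => -(tor k z).2 i) := by
  intro k
  induction k with
  | zero =>
    intro z; simp only [tor]; exact Prod.ext rfl (funext fun i => i.elim0)
  | succ k ih =>
    intro z
    have ht : Fin.tail (fun i => (z i).conj) = fun i => ((Fin.tail z) i).conj := rfl
    simp only [tor, ht, ih (Fin.tail z), coe_conj, Complex.conj_re, Complex.conj_im]
    refine Prod.ext rfl ?_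
    funext i
    refine Fin.cases ?_ (fun j => ?_) i <;> simp [mul_neg]

lemma tor_inj : ∀ (k : ℕ) (z z' : Fin k → Circle), tor k z = tor k z' → z = z' := by
  intro k
  induction k with
  | zero => intro z z' _; funext i; exact i.elim0
  | succ k ih =>
    intro z z' h
    simp only [tor, Prod.mk.injEq] at h
    set p := tor k (Fin.tail z) with hp
    set p' := tor k (Fin.tail z') with hp'
    have h1 : (3 ^ k + p.1) * ((z 0 : ℂ)).re = (3 ^ k + p'.1) * ((z' 0 : ℂ)).re := h.1
    have h2 : (Fin.cons ((3 ^ k + p.1) * ((z 0 : ℂ)).im) p.2 : Fin (k+1) → ℝ)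
        = Fin.cons ((3 ^ k + p'.1) * ((z' 0 : ℂ)).im) p'.2 := h.2
    have h3 : (3 ^ k + p.1) * ((z 0 : ℂ)).im = (3 ^ k + p'.1) * ((z' 0 : ℂ)).im := by
      have := congrFun h2 0; simpa using this
    have h4 : p.2 = p'.2 := by
      funext j
      have := congrFun h2 j.succ; simpa using this
    set r := 3 ^ k + p.1 with hr
    set r' := 3 ^ k + p'.1 with hr'
    have hr1 : (1:ℝ) ≤ r := tor_radius k _
    have hr1' : (1:ℝ) ≤ r' := tor_radius k _
    have hsq : r ^ 2 = r' ^ 2 := by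
      have e1 := circle_re_sq (z 0)
      have e2 := circle_re_sq (z' 0)
      have e3 : r ^ 2 = (r * ((z 0 : ℂ)).re) ^ 2 + (r * ((z 0 : ℂ)).im) ^ 2 := by
        have : (r * ((z 0 : ℂ)).re) ^ 2 + (r * ((z 0 : ℂ)).im) ^ 2
            = r ^ 2 * (((z 0 : ℂ)).re ^ 2 + ((z 0 : ℂ)).im ^ 2) := by ring
        rw [this, e1, mul_one]
      have e4 : r' ^ 2 = (r' * ((z' 0 : ℂ)).re) ^ 2 + (r' * ((z' 0 : ℂ)).im) ^ 2 := by
        have : (r' * ((z' 0 : ℂ)).re) ^ 2 + (r' * ((z' 0 : ℂ)).im) ^ 2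
            = r' ^ 2 * (((z' 0 : ℂ)).re ^ 2 + ((z' 0 : ℂ)).im ^ 2) := by ring
        rw [this, e2, mul_one]
      rw [e3, e4, h1, h3]
    have hrr : r = r' := by nlinarith
    have hfst : p.1 = p'.1 := by
      have : 3 ^ k + p.1 = 3 ^ k + p'.1 := hrr
      linarith
    have hr0 : r ≠ 0 := by linarith
    have hre : ((z 0 : ℂ)).re = ((z' 0 : ℂ)).re := by
      rw [← hrr] at h1; exact mul_left_cancel₀ hr0 h1
    have him : ((z 0 : ℂ)).im = ((z' 0 : ℂ)).im := by
      rw [← hrr] at h3; exact mul_left_cancel₀ hr0 h3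
    have hz0 : z 0 = z' 0 := Subtype.ext (Complex.ext hre him)
    have htail : Fin.tail z = Fin.tail z' := ih _ _ (Prod.ext hfst h4)
    funext i
    refine Fin.cases hz0 (fun j => ?_) i
    exact congrFun htail j

lemma tor_cont (k : ℕ) : Continuous (tor k) := by
  induction k with
  | zero => exact continuous_const
  | succ k ih =>
    have htail : Continuous fun (z : Fin (k+1) → Circle) => Fin.tail z :=
      continuous_pi fun i => continuous_apply _
    have hfst : Continuous fun (z : Fin (k+1) → Circle) => (tor k (Fin.tail z)).1 :=
      (continuous_fst.comp ih).comp htail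
    have hsnd : Continuous fun (z : Fin (k+1) → Circle) => (tor k (Fin.tail z)).2 :=
      (continuous_snd.comp ih).comp htail
    have h0 : Continuous fun (z : Fin (k+1) → Circle) => ((z 0 : ℂ)) :=
      continuous_subtype_val.comp (continuous_apply 0)
    have hre : Continuous fun (z : Fin (k+1) → Circle) => ((z 0 : ℂ)).re :=
      Complex.continuous_re.comp h0
    have him : Continuous fun (z : Fin (k+1) → Circle) => ((z 0 : ℂ)).im :=
      Complex.continuous_im.comp h0
    have hrad : Continuous fun (z : Fin (k+1) → Circle) => (3:ℝ) ^ k + (tor k (Fin.tail z)).1 :=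
      continuous_const.add hfst
    show Continuous fun z => (_ , _)
    refine Continuous.prodMk (hrad.mul hre) ?_
    refine continuous_pi fun i => ?_
    refine Fin.cases ?_ (fun j => ?_) i
    · simp; exact (hrad.mul him)
    · simp; exact (continuous_apply j).comp hsnd

/-- A complex structure on `ℝᵏ` (for `k` even), pairing consecutive coordinates. -/
def Jmap (k : ℕ) (v : Fin k → ℝ) : Fin k → ℝ := fun i =>
  if h : (i : ℕ) % 2 = 0 then
    (if h2 : (i : ℕ) + 1 < k then -v ⟨(i : ℕ) + 1, h2⟩ else 0)
  else v ⟨(i : ℕ) - 1, by omega⟩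

lemma Jmap_comb (k : ℕ) (a b : ℝ) (v w : Fin k → ℝ) :
    Jmap k (fun i => a * v i + b * w i) = fun i => a * Jmap k v i + b * Jmap k w i := by
  funext i
  simp only [Jmap]
  split_ifs <;> ring

lemma Jmap_neg (k : ℕ) (v : Fin k → ℝ) :
    Jmap k (fun i => -v i) = fun i => -Jmap k v i := by
  funext i
  simp only [Jmap]
  split_ifs <;> ring

lemma Jmap_Jmap (k : ℕ) (hk : k % 2 = 0) (v : Fin k → ℝ) :
    Jmap k (Jmap k v) = fun i => -v i := by
  funext i
  by_cases h : (i : ℕ) % 2 = 0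
  · have h2 : (i : ℕ) + 1 < k := by omega
    have h3 : ((i : ℕ) + 1) % 2 ≠ 0 := by omega
    simp only [Jmap, dif_pos h, dif_pos h2, dif_neg h3]
    exact neg_inj.mpr (congrArg v (Fin.ext (by simp)))
  · have h1 : (i : ℕ) - 1 < k := by omega
    have h2 : ((i : ℕ) - 1) % 2 = 0 := by omega
    have h3 : ((i : ℕ) - 1) + 1 < k := by omega
    simp only [Jmap, dif_neg h, dif_pos h2, dif_pos h3]
    exact neg_inj.mpr (congrArg v (Fin.ext (by simp; omega)))

lemma Jmap_cont (k : ℕ) : Continuous (Jmap k) := by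
  refine continuous_pi fun i => ?_
  simp only [Jmap]
  split_ifs with h h2
  · exact (continuous_apply _).neg
  · exact continuous_const
  · exact continuous_apply _

/-- Rotation `a + bJ` applied to `v`. -/
def Qmap (k : ℕ) (a b : ℝ) (v : Fin k → ℝ) : Fin k → ℝ :=
  fun i => a * v i + b * Jmap k v i

lemma Qmap_inj (k : ℕ) (hk : k % 2 = 0) (a b : ℝ) (hab : a ^ 2 + b ^ 2 = 1)
    (v v' : Fin k → ℝ) (h : Qmap k a b v = Qmap k a b v') : v = v' := by
  have key : ∀ u : Fin k → ℝ,
      (fun i => a * Qmap k a b u i - b * Jmap k (Qmap k a b u) i) = u := by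
    intro u
    have h1 : Jmap k (Qmap k a b u) = fun i => a * Jmap k u i + b * Jmap k (Jmap k u) i := by
      show Jmap k (fun i => a * u i + b * Jmap k u i) = _
      exact Jmap_comb k a b u (Jmap k u)
    funext i
    rw [h1]
    simp only [Qmap, Jmap_Jmap k hk u]
    linear_combination (u i) * hab
  calc v = _ := (key v).symm
    _ = _ := by rw [h]
    _ = v' := key v'

lemma Qmap_neg (k : ℕ) (a b : ℝ) (v : Fin k → ℝ) :
    Qmap k (-a) (-b) (fun i => -v i) = Qmap k a b v := by
  funext i
  simp only [Qmap, Jmap_neg]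
  ring

lemma circle_sq_re_sq (u : Circle) :
    (((u : ℂ)) ^ 2).re ^ 2 + (((u : ℂ)) ^ 2).im ^ 2 = 1 := by
  have h := circle_re_sq u
  have e1 : (((u : ℂ)) ^ 2).re = ((u:ℂ)).re * ((u:ℂ)).re - ((u:ℂ)).im * ((u:ℂ)).im := by
    simp [pow_two, Complex.mul_re]
  have e2 : (((u : ℂ)) ^ 2).im = ((u:ℂ)).re * ((u:ℂ)).im + ((u:ℂ)).im * ((u:ℂ)).re := by
    simp [pow_two, Complex.mul_im]
  rw [e1, e2]
  linear_combination (((u:ℂ)).re ^ 2 + ((u:ℂ)).im ^ 2 + 1) * h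

/-- The main invariant map `T^{2m+1} → ℝ × ℝ × ℝ^{2m}`. -/
def Fmap (m : ℕ) (z : Torus (2*m+1)) : ℝ × ℝ × (Fin (2*m) → ℝ) :=
  ((3 ^ (2*m) + (tor (2*m) (fun i => z i.castSucc)).1) * (((z (Fin.last (2*m)) : ℂ)) ^ 2).re,
   (3 ^ (2*m) + (tor (2*m) (fun i => z i.castSucc)).1) * (((z (Fin.last (2*m)) : ℂ)) ^ 2).im,
   Qmap (2*m) ((z (Fin.last (2*m)) : ℂ)).re ((z (Fin.last (2*m)) : ℂ)).im
     (tor (2*m) (fun i => z i.castSucc)).2)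

lemma klein_inv_castSucc (m : ℕ) (z : Torus (2*m+1)) (i : Fin (2*m)) :
    kleinInvolution (2*m+1) z i.castSucc = (z i.castSucc).conj := by
  have h2 := i.2
  simp only [kleinInvolution]
  rw [if_neg]
  simp only [Fin.coe_castSucc]
  omega

lemma klein_inv_last (m : ℕ) (z : Torus (2*m+1)) :
    kleinInvolution (2*m+1) z (Fin.last (2*m)) = (z (Fin.last (2*m))).neg := by
  simp [kleinInvolution]

lemma Fmap_inv (m : ℕ) (z : Torus (2*m+1)) :
    Fmap m (kleinInvolution (2*m+1) z) = Fmap m z := by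
  have hcast : (fun i : Fin (2*m) => kleinInvolution (2*m+1) z i.castSucc)
      = fun i => (z i.castSucc).conj := funext (klein_inv_castSucc m z)
  have htor := tor_conj (2*m) (fun i => z i.castSucc)
  have hw : ((kleinInvolution (2*m+1) z (Fin.last (2*m)) : ℂ)) = -((z (Fin.last (2*m)) : ℂ)) := by
    rw [klein_inv_last]; rfl
  simp only [Fmap, hcast, htor, hw, klein_inv_last]
  refine Prod.ext ?_ (Prod.ext ?_ ?_)
  · simp [coe_neg, neg_sq]
  · simp [coe_neg, neg_sq]
  · show Qmap (2*m) (-((z (Fin.last (2*m)) : ℂ))).re (-((z (Fin.last (2*m)) : ℂ))).im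
        (fun i => -(tor (2*m) fun i => z i.castSucc).2 i)
      = Qmap (2*m) _ _ (tor (2*m) fun i => z i.castSucc).2
    simp only [Complex.neg_re, Complex.neg_im]
    exact Qmap_neg (2*m) _ _ _

lemma Fmap_inj (m : ℕ) (z z' : Torus (2*m+1)) (h : Fmap m z = Fmap m z') :
    z' = z ∨ z' = kleinInvolution (2*m+1) z := by
  simp only [Fmap, Prod.mk.injEq] at h
  obtain ⟨h1, h2, h3⟩ := h
  set w := z (Fin.last (2*m)) with hwdef
  set w' := z' (Fin.last (2*m)) with hw'def
  set p := tor (2*m) (fun i => z i.castSucc) with hpdef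
  set p' := tor (2*m) (fun i => z' i.castSucc) with hp'def
  set r : ℝ := 3 ^ (2*m) + p.1 with hrdef
  set r' : ℝ := 3 ^ (2*m) + p'.1 with hr'def
  have hr1 : (1:ℝ) ≤ r := tor_radius _ _
  have hr1' : (1:ℝ) ≤ r' := tor_radius _ _
  -- recover r = r'
  have hsq : r ^ 2 = r' ^ 2 := by
    have e1 := circle_sq_re_sq w
    have e2 := circle_sq_re_sq w'
    have e3 : r ^ 2 = (r * (((w : ℂ)) ^ 2).re) ^ 2 + (r * (((w : ℂ)) ^ 2).im) ^ 2 := by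
      have : (r * (((w : ℂ)) ^ 2).re) ^ 2 + (r * (((w : ℂ)) ^ 2).im) ^ 2
          = r ^ 2 * ((((w : ℂ)) ^ 2).re ^ 2 + (((w : ℂ)) ^ 2).im ^ 2) := by ring
      rw [this, e1, mul_one]
    have e4 : r' ^ 2 = (r' * (((w' : ℂ)) ^ 2).re) ^ 2 + (r' * (((w' : ℂ)) ^ 2).im) ^ 2 := by
      have : (r' * (((w' : ℂ)) ^ 2).re) ^ 2 + (r' * (((w' : ℂ)) ^ 2).im) ^ 2
          = r' ^ 2 * ((((w' : ℂ)) ^ 2).re ^ 2 + (((w' : ℂ)) ^ 2).im ^ 2) := by ring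
      rw [this, e2, mul_one]
    rw [e3, e4, h1, h2]
  have hrr : r = r' := by nlinarith
  have hfst : p.1 = p'.1 := by
    have : 3 ^ (2*m) + p.1 = 3 ^ (2*m) + p'.1 := hrr
    linarith
  have hr0 : r ≠ 0 := by linarith
  have hre2 : (((w : ℂ)) ^ 2).re = (((w' : ℂ)) ^ 2).re := by
    rw [← hrr] at h1; exact mul_left_cancel₀ hr0 h1
  have him2 : (((w : ℂ)) ^ 2).im = (((w' : ℂ)) ^ 2).im := by
    rw [← hrr] at h2; exact mul_left_cancel₀ hr0 h2
  have hww : ((w' : ℂ)) ^ 2 = ((w : ℂ)) ^ 2 := (Complex.ext hre2 him2).symm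
  have hcases : ((w' : ℂ)) = ((w : ℂ)) ∨ ((w' : ℂ)) = -((w : ℂ)) := by
    have : (((w' : ℂ)) - ((w : ℂ))) * (((w' : ℂ)) + ((w : ℂ))) = 0 := by
      linear_combination hww
    rcases mul_eq_zero.mp this with h | h
    · exact Or.inl (sub_eq_zero.mp h)
    · exact Or.inr (eq_neg_of_add_eq_zero_left h)
  have habw : ((w : ℂ)).re ^ 2 + ((w : ℂ)).im ^ 2 = 1 := circle_re_sq w
  rcases hcases with hc | hc
  · -- w' = w
    left
    have hwc : w' = w := Subtype.ext hc
    have h3' : Qmap (2*m) ((w : ℂ)).re ((w : ℂ)).im p.2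
        = Qmap (2*m) ((w : ℂ)).re ((w : ℂ)).im p'.2 := by
      rw [hwc] at h3
      exact h3
    have hsnd : p.2 = p'.2 := Qmap_inj (2*m) (by omega) _ _ habw _ _ h3'
    have htor : (fun i : Fin (2*m) => z i.castSucc) = fun i => z' i.castSucc :=
      tor_inj _ _ _ (Prod.ext hfst hsnd)
    funext i
    refine Fin.lastCases ?_ (fun j => ?_) i
    · exact hwc
    · exact (congrFun htor j).symm
  · -- w' = -w
    right
    have hwc : w' = w.neg := Subtype.ext (by rw [coe_neg]; exact hc)
    have hre' : ((w' : ℂ)).re = -((w : ℂ)).re := by rw [hc]; simp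
    have him' : ((w' : ℂ)).im = -((w : ℂ)).im := by rw [hc]; simp
    have h3' : Qmap (2*m) ((w : ℂ)).re ((w : ℂ)).im p.2
        = Qmap (2*m) ((w : ℂ)).re ((w : ℂ)).im (fun i => -p'.2 i) := by
      have e : Qmap (2*m) (-((w : ℂ)).re) (-((w : ℂ)).im) p'.2
          = Qmap (2*m) ((w : ℂ)).re ((w : ℂ)).im (fun i => -p'.2 i) := by
        have := Qmap_neg (2*m) ((w : ℂ)).re ((w : ℂ)).im (fun i => -p'.2 i)
        have e2 : (fun i => -(fun i => -p'.2 i) i) = p'.2 := by funext i; simp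
        rw [e2] at this
        exact this
      rw [← e]
      rw [hre', him'] at h3
      exact h3
    have hsnd : p.2 = fun i => -p'.2 i := Qmap_inj (2*m) (by omega) _ _ habw _ _ h3'
    -- tor of conjugated tuple equals tor of z' tuple
    have htc := tor_conj (2*m) (fun i => z i.castSucc)
    have htor : (fun i : Fin (2*m) => (z i.castSucc).conj) = fun i => z' i.castSucc := by
      apply tor_inj
      rw [htc, ← hpdef, ← hp'def]
      refine Prod.ext hfst ?_
      show (fun i => -p.2 i) = p'.2
      funext i
      rw [hsnd]
      simp
    funext i
    refine Fin.lastCases ?_ (fun j => ?_) i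
    · rw [klein_inv_last, ← hwdef, ← hw'def, hwc]
    · rw [klein_inv_castSucc]
      exact (congrFun htor j).symm

lemma Fmap_cont (m : ℕ) : Continuous (Fmap m) := by
  have hy : Continuous fun (z : Torus (2*m+1)) => (fun i : Fin (2*m) => z i.castSucc) :=
    continuous_pi fun i => continuous_apply _
  have htor : Continuous fun (z : Torus (2*m+1)) => tor (2*m) (fun i => z i.castSucc) :=
    (tor_cont (2*m)).comp hy
  have hfst : Continuous fun (z : Torus (2*m+1)) => (tor (2*m) (fun i => z i.castSucc)).1 :=
    continuous_fst.comp htor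
  have hsnd : Continuous fun (z : Torus (2*m+1)) => (tor (2*m) (fun i => z i.castSucc)).2 :=
    continuous_snd.comp htor
  have hw : Continuous fun (z : Torus (2*m+1)) => ((z (Fin.last (2*m)) : ℂ)) :=
    continuous_subtype_val.comp (continuous_apply _)
  have hw2 : Continuous fun (z : Torus (2*m+1)) => ((z (Fin.last (2*m)) : ℂ)) ^ 2 := hw.pow 2
  have hrad : Continuous fun (z : Torus (2*m+1)) =>
      (3:ℝ) ^ (2*m) + (tor (2*m) (fun i => z i.castSucc)).1 := continuous_const.add hfst
  refine Continuous.prodMk (hrad.mul (Complex.continuous_re.comp hw2))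
    (Continuous.prodMk (hrad.mul (Complex.continuous_im.comp hw2)) ?_)
  -- continuity of the Qmap component
  refine continuous_pi fun i => ?_
  have hJ : Continuous fun (z : Torus (2*m+1)) =>
      Jmap (2*m) (tor (2*m) (fun i => z i.castSucc)).2 i :=
    ((continuous_apply i).comp (Jmap_cont (2*m))).comp hsnd
  exact (((Complex.continuous_re.comp hw).mul ((continuous_apply i).comp hsnd)).add
    ((Complex.continuous_im.comp hw).mul hJ))

/-- If `n` is odd, then `Kₙ` admits a topological embedding
into `ℝ^{n+1}`. -/
theorem klein_embeds_of_odd (n : ℕ) (hn : Odd n) :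
    ∃ f : Klein n → EuclideanSpace ℝ (Fin (n + 1)), Topology.IsEmbedding f := by
  obtain ⟨m, rfl⟩ := hn
  -- the final coordinate packaging map
  set G : ℝ × ℝ × (Fin (2*m) → ℝ) → EuclideanSpace ℝ (Fin (2*m+1+1)) :=
    fun x => (EuclideanSpace.equiv (Fin (2*m+1+1)) ℝ).symm
      (Fin.cons x.1 (Fin.cons x.2.1 x.2.2)) with hGdef
  have hGinj : Function.Injective G := by
    intro x y hxy
    have h : (Fin.cons x.1 (Fin.cons x.2.1 x.2.2) : Fin (2*m+1+1) → ℝ)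
        = Fin.cons y.1 (Fin.cons y.2.1 y.2.2) :=
      (EuclideanSpace.equiv (Fin (2*m+1+1)) ℝ).symm.injective hxy
    refine Prod.ext ?_ (Prod.ext ?_ ?_)
    · have := congrFun h 0; simpa using this
    · have := congrFun h (Fin.succ 0); simpa using this
    · funext i
      have := congrFun h (Fin.succ (Fin.succ i)); simpa using this
  have hGcont : Continuous G := by
    refine ((EuclideanSpace.equiv (Fin (2*m+1+1)) ℝ).symm.continuous).comp ?_
    refine continuous_pi fun i => ?_
    refine Fin.cases ?_ (fun j => ?_) i
    · simpa using continuous_fst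
    · simp only [Fin.cons_succ]
      refine Fin.cases ?_ (fun l => ?_) j
      · simp; exact continuous_fst.comp continuous_snd
      · simp; exact (continuous_apply l).comp (continuous_snd.comp continuous_snd)
  -- the invariance needed to descend to the quotient
  have hsound : ∀ z z' : Torus (2*m+1), KleinRel (2*m+1) z z' → G (Fmap m z) = G (Fmap m z') := by
    intro z z' hrel
    rw [hrel, Fmap_inv]
  refine ⟨Quot.lift (fun z => G (Fmap m z)) hsound, ?_⟩
  haveI : CompactSpace (Klein (2*m+1)) :=
    inferInstanceAs (CompactSpace (Quot (KleinRel (2*m+1))))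
  have hcont : Continuous (Quot.lift (fun z => G (Fmap m z)) hsound) :=
    continuous_quot_lift _ (hGcont.comp (Fmap_cont m))
  have hinj : Function.Injective (Quot.lift (fun z => G (Fmap m z)) hsound) := by
    intro q q'
    induction q using Quot.ind with | _ z =>
    induction q' using Quot.ind with | _ z' =>
    intro h
    have hF : Fmap m z = Fmap m z' := hGinj h
    rcases Fmap_inj m z z' hF with hc | hc
    · rw [hc]
    · have hrel : KleinRel (2*m+1) z z' := hc
      exact Quot.sound hrel
  exact (hcont.isClosedEmbedding hinj).isEmbedding
end
end
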